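/- arXiv:2004.02210 — 5 statements merged into one kernel-verified Lean document; each statement's English description precedes it below -/
import Mathlib

section
/- Under Assumption A, let k ∈ ℕ, λ > 0, ρ ∈ (0,1), and x_k ∈ ℝ^d. Then U_k² ≤ (∫_{ℝ^d} ‖x − x*‖₂² exp[−ρ^{−k}((l/2)‖x − x*‖₂² + (λ/2)‖x − x_k‖₂²)] dx) / (∫_{ℝ^d} exp[−ρ^{−k}((L/2)‖x − x*‖₂² + (λ/2)‖x − x_k‖₂²)] dx). -/
open MeasureTheory Real

noncomputable section

lemma gauss_integrable {d : ℕ} {b : ℝ} (hb : 0 < b) (c : EuclideanSpace ℝ (Fin d)) :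
    Integrable (fun x : EuclideanSpace ℝ (Fin d) => Real.exp (-(b * ‖x - c‖ ^ 2))) := by
  have h0 : Integrable (fun v : EuclideanSpace ℝ (Fin d) => Real.exp (-(b * ‖v‖ ^ 2))) := by
    have h := (GaussianFourier.integrable_cexp_neg_mul_sq_norm_add
      (V := EuclideanSpace ℝ (Fin d)) (b := (b : ℂ)) (by simpa using hb) 0 0).norm
    simpa [Complex.norm_exp, neg_mul, ← Complex.ofReal_pow] using h
  have hmp : MeasurePreserving (fun x : EuclideanSpace ℝ (Fin d) => x - c) volume volume :=
    measurePreserving_sub_right volume c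
  have := (hmp.integrable_comp_emb (MeasurableEquiv.subRight c).measurableEmbedding).mpr h0
  simpa [Function.comp_def] using this

lemma mul_exp_aux {b t : ℝ} (hb : 0 < b) :
    t * Real.exp (-(b * t)) ≤ 2 / b * Real.exp (-(b / 2 * t)) := by
  have h1 : t * Real.exp (-(b / 2 * t)) ≤ 2 / b := by
    have h2 : b / 2 * t ≤ Real.exp (b / 2 * t) := (Real.add_one_le_exp _).trans' (by linarith)
    rw [Real.exp_neg, mul_inv_le_iff₀ (Real.exp_pos _), div_mul_eq_mul_div,
      le_div_iff₀ hb]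
    nlinarith [Real.exp_pos (b / 2 * t)]
  have h3 : t * Real.exp (-(b * t)) = (t * Real.exp (-(b / 2 * t))) * Real.exp (-(b / 2 * t)) := by
    rw [mul_assoc, ← Real.exp_add]; ring_nf
  rw [h3]
  exact mul_le_mul_of_nonneg_right h1 (Real.exp_pos _).le

lemma sq_gauss_integrable {d : ℕ} {b : ℝ} (hb : 0 < b) (c : EuclideanSpace ℝ (Fin d)) :
    Integrable (fun x : EuclideanSpace ℝ (Fin d) =>
      ‖x - c‖ ^ 2 * Real.exp (-(b * ‖x - c‖ ^ 2))) := by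
  refine ((gauss_integrable (half_pos hb) c).const_mul (2 / b)).mono' ?_ ?_
  · exact Continuous.aestronglyMeasurable (by fun_prop)
  · filter_upwards with x
    rw [Real.norm_of_nonneg (by positivity)]
    exact mul_exp_aux hb

/-- First step of Lemma 3.3: under Assumption A, `U_k²` is bounded by a ratio of
Gaussian-type integrals with the quadratic lower/upper envelopes of `f`. -/
theorem Uk_sq_le_envelope_ratio
    (d : ℕ) (hd : 1 ≤ d)
    (f : EuclideanSpace ℝ (Fin d) → ℝ) (hf : Measurable f)
    (xs : EuclideanSpace ℝ (Fin d)) (l L : ℝ) (hl : 0 < l) (hlL : l ≤ L)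
    (hlow : ∀ x, f xs + l / 2 * ‖x - xs‖ ^ 2 ≤ f x)
    (hup : ∀ x, f x ≤ f xs + L / 2 * ‖x - xs‖ ^ 2)
    (k : ℕ) (lam ρ : ℝ) (hlam : 0 < lam) (hρ0 : 0 < ρ) (hρ1 : ρ < 1)
    (xk : EuclideanSpace ℝ (Fin d))
    (U : ℝ)
    (hU : U = (∫ x : EuclideanSpace ℝ (Fin d),
        ‖x - xs‖ * Real.exp (-((ρ ^ k)⁻¹ * (f x + lam / 2 * ‖x - xk‖ ^ 2)))) /
      ∫ x : EuclideanSpace ℝ (Fin d),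
        Real.exp (-((ρ ^ k)⁻¹ * (f x + lam / 2 * ‖x - xk‖ ^ 2)))) :
    U ^ 2 ≤ (∫ x : EuclideanSpace ℝ (Fin d),
        ‖x - xs‖ ^ 2 *
          Real.exp (-((ρ ^ k)⁻¹ * (l / 2 * ‖x - xs‖ ^ 2 + lam / 2 * ‖x - xk‖ ^ 2)))) /
      ∫ x : EuclideanSpace ℝ (Fin d),
        Real.exp (-((ρ ^ k)⁻¹ * (L / 2 * ‖x - xs‖ ^ 2 + lam / 2 * ‖x - xk‖ ^ 2))) := by
  have hL : 0 < L := hl.trans_le hlL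
  have hβ : (0 : ℝ) < (ρ ^ k)⁻¹ := by positivity
  set β : ℝ := (ρ ^ k)⁻¹ with hβdef
  set g : EuclideanSpace ℝ (Fin d) → ℝ :=
    fun x => Real.exp (-(β * (f x + lam / 2 * ‖x - xk‖ ^ 2))) with hgdef
  set Gl : EuclideanSpace ℝ (Fin d) → ℝ :=
    fun x => Real.exp (-(β * (l / 2 * ‖x - xs‖ ^ 2 + lam / 2 * ‖x - xk‖ ^ 2))) with hGldef
  set Gu : EuclideanSpace ℝ (Fin d) → ℝ :=
    fun x => Real.exp (-(β * (L / 2 * ‖x - xs‖ ^ 2 + lam / 2 * ‖x - xk‖ ^ 2))) with hGudef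
  set c0 : ℝ := Real.exp (-(β * f xs)) with hc0def
  have hc0 : 0 < c0 := Real.exp_pos _
  have hgpos : ∀ x, 0 < g x := fun x => Real.exp_pos _
  have hGlpos : ∀ x, 0 < Gl x := fun x => Real.exp_pos _
  have hGupos : ∀ x, 0 < Gu x := fun x => Real.exp_pos _
  have hmg : Measurable g := by
    apply Real.measurable_exp.comp
    exact ((hf.add ((((measurable_id.sub_const xk).norm).pow_const 2).const_mul
      (lam / 2))).const_mul β).neg
  have key_up : ∀ x, g x ≤ c0 * Gl x := by
    intro x
    rw [hgdef, hGldef, hc0def, ← Real.exp_add]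
    apply Real.exp_le_exp.mpr
    have h := hlow x
    nlinarith [hβ.le]
  have key_low : ∀ x, c0 * Gu x ≤ g x := by
    intro x
    rw [hgdef, hGudef, hc0def, ← Real.exp_add]
    apply Real.exp_le_exp.mpr
    have h := hup x
    nlinarith [hβ.le]
  -- integrability
  have hIGl : Integrable Gl := by
    refine (gauss_integrable (b := β * (l / 2)) (by positivity) xs).mono'
      (Continuous.aestronglyMeasurable (by rw [hGldef]; fun_prop)) ?_
    filter_upwards with x
    rw [Real.norm_of_nonneg (hGlpos x).le, hGldef]
    apply Real.exp_le_exp.mpr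
    have h0 : (0:ℝ) ≤ lam / 2 * ‖x - xk‖ ^ 2 := by positivity
    nlinarith [hβ.le]
  have hIGu : Integrable Gu := by
    refine (gauss_integrable (b := β * (L / 2)) (by positivity) xs).mono'
      (Continuous.aestronglyMeasurable (by rw [hGudef]; fun_prop)) ?_
    filter_upwards with x
    rw [Real.norm_of_nonneg (hGupos x).le, hGudef]
    apply Real.exp_le_exp.mpr
    have h0 : (0:ℝ) ≤ lam / 2 * ‖x - xk‖ ^ 2 := by positivity
    nlinarith [hβ.le]
  have hIN : Integrable (fun x => ‖x - xs‖ ^ 2 * Gl x) := by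
    refine (sq_gauss_integrable (b := β * (l / 2)) (by positivity) xs).mono'
      (Continuous.aestronglyMeasurable (by rw [hGldef]; fun_prop)) ?_
    filter_upwards with x
    rw [Real.norm_of_nonneg (by positivity)]
    refine mul_le_mul_of_nonneg_left ?_ (by positivity)
    rw [hGldef]
    apply Real.exp_le_exp.mpr
    have h0 : (0:ℝ) ≤ lam / 2 * ‖x - xk‖ ^ 2 := by positivity
    nlinarith [hβ.le]
  have hIg : Integrable g := by
    refine (hIGl.const_mul c0).mono' hmg.aestronglyMeasurable ?_
    filter_upwards with x
    rw [Real.norm_of_nonneg (hgpos x).le]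
    exact key_up x
  have hIg2 : Integrable (fun x => ‖x - xs‖ ^ 2 * g x) := by
    refine (hIN.const_mul c0).mono'
      ((((measurable_id.sub_const xs).norm.pow_const 2).mul hmg).aestronglyMeasurable) ?_
    filter_upwards with x
    rw [Real.norm_of_nonneg (by positivity)]
    calc ‖x - xs‖ ^ 2 * g x ≤ ‖x - xs‖ ^ 2 * (c0 * Gl x) :=
          mul_le_mul_of_nonneg_left (key_up x) (by positivity)
      _ = c0 * (‖x - xs‖ ^ 2 * Gl x) := by ring
  have hIg1 : Integrable (fun x => ‖x - xs‖ * g x) := by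
    refine (hIg.add hIg2).mono'
      (((measurable_id.sub_const xs).norm.mul hmg).aestronglyMeasurable) ?_
    filter_upwards with x
    rw [Real.norm_of_nonneg (by positivity)]
    have ht : ‖x - xs‖ ≤ 1 + ‖x - xs‖ ^ 2 := by nlinarith [sq_nonneg (‖x - xs‖ - 1)]
    calc ‖x - xs‖ * g x ≤ (1 + ‖x - xs‖ ^ 2) * g x :=
          mul_le_mul_of_nonneg_right ht (hgpos x).le
      _ = g x + ‖x - xs‖ ^ 2 * g x := by ring
  -- positivity of integrals
  have hB : 0 < ∫ x, g x := by
    rw [integral_pos_iff_support_of_nonneg (fun x => (hgpos x).le) hIg]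
    have hsupp : Function.support g = Set.univ := Set.eq_univ_of_forall fun x => (hgpos x).ne'
    rw [hsupp]
    exact isOpen_univ.measure_pos volume ⟨0, trivial⟩
  have hD : 0 < ∫ x, Gu x := by
    rw [integral_pos_iff_support_of_nonneg (fun x => (hGupos x).le) hIGu]
    have hsupp : Function.support Gu = Set.univ := Set.eq_univ_of_forall fun x => (hGupos x).ne'
    rw [hsupp]
    exact isOpen_univ.measure_pos volume ⟨0, trivial⟩
  have hNnn : 0 ≤ ∫ x, ‖x - xs‖ ^ 2 * Gl x := integral_nonneg fun x => by positivity
  have hAnn : 0 ≤ ∫ x, ‖x - xs‖ * g x := integral_nonneg fun x => by positivity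
  -- Cauchy-Schwarz
  have hCS : (∫ x, ‖x - xs‖ * g x) ^ 2 ≤ (∫ x, ‖x - xs‖ ^ 2 * g x) * ∫ x, g x := by
    have hpq : Real.HolderConjugate 2 2 := Real.holderConjugate_iff.mpr ⟨one_lt_two, by norm_num⟩
    have hrp2 : ∀ c : ℝ, c ^ (2 : ℝ) = c ^ 2 := fun c => by
      rw [show (2:ℝ) = ((2:ℕ):ℝ) by norm_num, Real.rpow_natCast]
    have hφm : AEStronglyMeasurable (fun x => ‖x - xs‖ * Real.sqrt (g x)) volume :=
      ((measurable_id.sub_const xs).norm.mul hmg.sqrt).aestronglyMeasurable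
    have hψm : AEStronglyMeasurable (fun x => Real.sqrt (g x)) volume :=
      hmg.sqrt.aestronglyMeasurable
    have hφsq : ∀ x, (‖x - xs‖ * Real.sqrt (g x)) ^ 2 = ‖x - xs‖ ^ 2 * g x := fun x => by
      rw [mul_pow, Real.sq_sqrt (hgpos x).le]
    have hψsq : ∀ x, Real.sqrt (g x) ^ 2 = g x := fun x => Real.sq_sqrt (hgpos x).le
    have hφ2 : MemLp (fun x => ‖x - xs‖ * Real.sqrt (g x)) (ENNReal.ofReal 2) volume := by
      rw [show ENNReal.ofReal 2 = 2 by norm_num, memLp_two_iff_integrable_sq hφm]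
      exact hIg2.congr (Filter.Eventually.of_forall fun x => (hφsq x).symm)
    have hψ2 : MemLp (fun x => Real.sqrt (g x)) (ENNReal.ofReal 2) volume := by
      rw [show ENNReal.ofReal 2 = 2 by norm_num, memLp_two_iff_integrable_sq hψm]
      exact hIg.congr (Filter.Eventually.of_forall fun x => (hψsq x).symm)
    have h := integral_mul_le_Lp_mul_Lq_of_nonneg hpq
      (Filter.Eventually.of_forall fun x => by positivity)
      (Filter.Eventually.of_forall fun x => Real.sqrt_nonneg _) hφ2 hψ2
    have hprod : ∀ x, (‖x - xs‖ * Real.sqrt (g x)) * Real.sqrt (g x) = ‖x - xs‖ * g x :=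
      fun x => by rw [mul_assoc, Real.mul_self_sqrt (hgpos x).le]
    rw [integral_congr_ae (Filter.Eventually.of_forall hprod)] at h
    simp only [hrp2, hφsq, hψsq] at h
    have hsq : ∀ c : ℝ, 0 ≤ c → (c ^ (1/2 : ℝ)) ^ 2 = c := fun c hc => by
      rw [← Real.rpow_natCast (c ^ (1/2:ℝ)) 2, ← Real.rpow_mul hc]; norm_num
    have hBnn : 0 ≤ ∫ x, g x := hB.le
    have hg2nn : 0 ≤ ∫ x, ‖x - xs‖ ^ 2 * g x := integral_nonneg fun x => by positivity
    calc (∫ x, ‖x - xs‖ * g x) ^ 2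
        ≤ ((∫ x, ‖x - xs‖ ^ 2 * g x) ^ (1/2:ℝ) * (∫ x, g x) ^ (1/2:ℝ)) ^ 2 :=
          pow_le_pow_left₀ hAnn h 2
      _ = (∫ x, ‖x - xs‖ ^ 2 * g x) * ∫ x, g x := by
          rw [mul_pow, hsq _ hg2nn, hsq _ hBnn]
  -- envelope bounds on integrals
  have h1 : (∫ x, ‖x - xs‖ ^ 2 * g x) ≤ c0 * ∫ x, ‖x - xs‖ ^ 2 * Gl x := by
    rw [← integral_const_mul]
    refine integral_mono hIg2 (hIN.const_mul c0) fun x => ?_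
    calc ‖x - xs‖ ^ 2 * g x ≤ ‖x - xs‖ ^ 2 * (c0 * Gl x) :=
          mul_le_mul_of_nonneg_left (key_up x) (by positivity)
      _ = c0 * (‖x - xs‖ ^ 2 * Gl x) := by ring
  have h2 : c0 * (∫ x, Gu x) ≤ ∫ x, g x := by
    rw [← integral_const_mul]
    exact integral_mono (hIGu.const_mul c0) hIg fun x => key_low x
  -- combine
  rw [hU, div_pow]
  have hBB : (0:ℝ) < (∫ x, g x) ^ 2 := by positivity
  calc (∫ x, ‖x - xs‖ * g x) ^ 2 / (∫ x, g x) ^ 2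
      ≤ (c0 * (∫ x, ‖x - xs‖ ^ 2 * Gl x) * ∫ x, g x) / (c0 * (∫ x, Gu x) * ∫ x, g x) := by
        apply div_le_div₀ (by positivity)
        · calc (∫ x, ‖x - xs‖ * g x) ^ 2 ≤ (∫ x, ‖x - xs‖ ^ 2 * g x) * ∫ x, g x := hCS
            _ ≤ c0 * (∫ x, ‖x - xs‖ ^ 2 * Gl x) * ∫ x, g x :=
              mul_le_mul_of_nonneg_right h1 hB.le
        · positivity
        · calc c0 * (∫ x, Gu x) * ∫ x, g x ≤ (∫ x, g x) * ∫ x, g x :=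
              mul_le_mul_of_nonneg_right h2 hB.le
            _ = (∫ x, g x) ^ 2 := (sq _).symm
      _ = (∫ x, ‖x - xs‖ ^ 2 * Gl x) / ∫ x, Gu x := by
        rw [mul_div_mul_right _ _ hB.ne', mul_div_mul_left _ _ hc0.ne']
end
end

section
/- Under Assumption A, let k ∈ ℕ, λ > 0, ρ ∈ (0,1), and x_k ∈ ℝ^d. Then the expectation of ψ_k under the Gaussian measure N(x_k, ρ^k λ^{−1} I_d) satisfies the lower bound E[ψ_k] ≥ exp(−ρ^{−k} f*) · (λ/(L+λ))^{d/2} · exp(−ρ^{−k} Lλ‖x_k − x*‖₂² / (2(L+λ))). -/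
open MeasureTheory Real

noncomputable section

lemma gauss_integrable_aux (d : ℕ) (b : ℝ) (hb : 0 < b) :
    Integrable (fun v : EuclideanSpace ℝ (Fin d) => rexp (-b * ‖v‖ ^ 2)) := by
  have h := GaussianFourier.integrable_cexp_neg_mul_sq_norm_add
    (V := EuclideanSpace ℝ (Fin d)) (b := (b : ℂ)) (by simpa using hb) 0
    (0 : EuclideanSpace ℝ (Fin d))
  refine h.re.congr (Filter.Eventually.of_forall fun v => ?_)
  simp only
  rw [show (-(b:ℂ) * (‖v‖:ℂ) ^ 2 + 0 * ((inner ℝ (0 : EuclideanSpace ℝ (Fin d)) v : ℝ) : ℂ))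
      = ((-b * ‖v‖^2 : ℝ) : ℂ) by push_cast; ring]
  exact Complex.exp_ofReal_re _

lemma complete_square_aux (d : ℕ) (L lam : ℝ) (hLl : 0 < L + lam)
    (u w : EuclideanSpace ℝ (Fin d)) :
    L * ‖u - w‖ ^ 2 + lam * ‖u‖ ^ 2
      = (L + lam) * ‖u - (L / (L + lam)) • w‖ ^ 2 + L * lam / (L + lam) * ‖w‖ ^ 2 := by
  rw [norm_sub_sq_real, norm_sub_sq_real, real_inner_smul_right, norm_smul,
    mul_pow, Real.norm_eq_abs, sq_abs]
  field_simp
  ring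

set_option maxHeartbeats 1000000 in
/-- Lower bound for `E[ψ_k]` (from the proof of Lemma 3.4). -/
theorem Epsi_lower_bound
    (d : ℕ) (hd : 1 ≤ d)
    (f : EuclideanSpace ℝ (Fin d) → ℝ) (hf : Measurable f)
    (xs : EuclideanSpace ℝ (Fin d)) (l L : ℝ) (hl : 0 < l) (hlL : l ≤ L)
    (hlow : ∀ x, f xs + l / 2 * ‖x - xs‖ ^ 2 ≤ f x)
    (hup : ∀ x, f x ≤ f xs + L / 2 * ‖x - xs‖ ^ 2)
    (k : ℕ) (lam ρ : ℝ) (hlam : 0 < lam) (hρ0 : 0 < ρ) (hρ1 : ρ < 1)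
    (xk : EuclideanSpace ℝ (Fin d))
    (Eψ : ℝ)
    (hEψ : Eψ = ((ρ ^ k)⁻¹ * lam / (2 * π)) ^ ((d : ℝ) / 2) *
      ∫ x : EuclideanSpace ℝ (Fin d),
        Real.exp (-((ρ ^ k)⁻¹ * f x)) *
          Real.exp (-((ρ ^ k)⁻¹ * lam * ‖x - xk‖ ^ 2 / 2))) :
    Real.exp (-((ρ ^ k)⁻¹ * f xs)) * (lam / (L + lam)) ^ ((d : ℝ) / 2) *
        Real.exp (-((ρ ^ k)⁻¹ * L * lam * ‖xk - xs‖ ^ 2 / (2 * (L + lam))))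
      ≤ Eψ := by
  have hL : 0 < L := lt_of_lt_of_le hl hlL
  have hLl : 0 < L + lam := by linarith
  set β : ℝ := (ρ ^ k)⁻¹ with hβdef
  have hβ : 0 < β := by positivity
  set c : ℝ := β * (L + lam) / 2 with hcdef
  have hc : 0 < c := by positivity
  set m : EuclideanSpace ℝ (Fin d) := xk + (L / (L + lam)) • (xs - xk) with hm
  set D : ℝ := β * L * lam * ‖xk - xs‖ ^ 2 / (2 * (L + lam)) with hD
  -- key pointwise identity (completion of squares)
  have key : ∀ x : EuclideanSpace ℝ (Fin d),
      β * L / 2 * ‖x - xs‖ ^ 2 + β * lam / 2 * ‖x - xk‖ ^ 2 = c * ‖x - m‖ ^ 2 + D := by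
    intro x
    have h1 : x - m = (x - xk) - (L / (L + lam)) • (xs - xk) := by
      rw [hm]; abel
    have h2 : x - xs = (x - xk) - (xs - xk) := by abel
    have h3 := complete_square_aux d L lam hLl (x - xk) (xs - xk)
    have h4 : ‖xk - xs‖ = ‖xs - xk‖ := by rw [← norm_neg]; congr 1; abel
    have hne : (L + lam) ≠ 0 := ne_of_gt hLl
    rw [h2, h1, hD, hcdef, h4]
    rw [← div_div]
    linear_combination (β / 2) * h3
  -- the integrand and its pointwise lower bound
  set g : EuclideanSpace ℝ (Fin d) → ℝ :=
    fun x => Real.exp (-(β * f x)) * Real.exp (-(β * lam * ‖x - xk‖ ^ 2 / 2)) with hg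
  set h : EuclideanSpace ℝ (Fin d) → ℝ :=
    fun x => Real.exp (-(β * f xs) - D) * Real.exp (-c * ‖x - m‖ ^ 2) with hhdef
  have hmono : ∀ x, h x ≤ g x := by
    intro x
    rw [hhdef, hg]
    simp only
    rw [← Real.exp_add, ← Real.exp_add]
    apply Real.exp_le_exp.2
    have h5 := hup x
    have h6 := key x
    have h7 : β * f x ≤ β * f xs + β * L / 2 * ‖x - xs‖ ^ 2 := by nlinarith
    linarith
  -- integrability of g
  have hgi : Integrable g := by
    have hn : Measurable fun x : EuclideanSpace ℝ (Fin d) => ‖x - xk‖ :=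
      (continuous_id.sub continuous_const).norm.measurable
    have hGm : Measurable g :=
      ((hf.const_mul β).neg.exp).mul
        ((((hn.pow_const 2).const_mul (β * lam)).div_const 2).neg.exp)
    have hbase := gauss_integrable_aux d (β * lam / 2) (by positivity)
    have hdom := (hbase.comp_sub_right xk).const_mul (Real.exp (-(β * f xs)))
    refine hdom.mono' hGm.aestronglyMeasurable (Filter.Eventually.of_forall fun x => ?_)
    rw [Real.norm_eq_abs, abs_of_pos (by positivity)]
    rw [hg]; simp only
    apply mul_le_mul _ _ (Real.exp_nonneg _) (Real.exp_nonneg _)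
    · apply Real.exp_le_exp.2
      have h8 : f xs ≤ f x := by nlinarith [hlow x, sq_nonneg ‖x - xs‖]
      nlinarith
    · apply le_of_eq
      congr 1
      ring
  -- value of the lower integral
  have hint : ∫ x : EuclideanSpace ℝ (Fin d), h x
      = Real.exp (-(β * f xs) - D) * (π / c) ^ ((d : ℝ) / 2) := by
    simp only [hhdef]
    rw [integral_const_mul]
    congr 1
    rw [integral_sub_right_eq_self
      (fun y : EuclideanSpace ℝ (Fin d) => Real.exp (-c * ‖y‖ ^ 2)) m,
      GaussianFourier.integral_rexp_neg_mul_sq_norm hc, finrank_euclideanSpace_fin]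
  have hle : Real.exp (-(β * f xs) - D) * (π / c) ^ ((d : ℝ) / 2)
      ≤ ∫ x : EuclideanSpace ℝ (Fin d), g x := by
    rw [← hint]
    exact integral_mono_of_nonneg
      (Filter.Eventually.of_forall fun x => by rw [hhdef]; positivity)
      hgi (Filter.Eventually.of_forall hmono)
  have hA : (0:ℝ) < β * lam / (2 * π) := by positivity
  have hcomb : (β * lam / (2 * π)) ^ ((d : ℝ) / 2) * (π / c) ^ ((d : ℝ) / 2)
      = (lam / (L + lam)) ^ ((d : ℝ) / 2) := by
    rw [← Real.mul_rpow hA.le (by positivity)]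
    congr 1
    rw [hcdef]
    have hπ : (0:ℝ) < π := Real.pi_pos
    field_simp
  calc Real.exp (-(β * f xs)) * (lam / (L + lam)) ^ ((d : ℝ) / 2) *
        Real.exp (-(β * L * lam * ‖xk - xs‖ ^ 2 / (2 * (L + lam))))
      = (β * lam / (2 * π)) ^ ((d : ℝ) / 2) *
          (Real.exp (-(β * f xs) - D) * (π / c) ^ ((d : ℝ) / 2)) := by
        rw [← hcomb, hD,
          show -(β * f xs) - β * L * lam * ‖xk - xs‖ ^ 2 / (2 * (L + lam))
            = -(β * f xs) + -(β * L * lam * ‖xk - xs‖ ^ 2 / (2 * (L + lam))) by ring,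
          Real.exp_add]
        ring
    _ ≤ (β * lam / (2 * π)) ^ ((d : ℝ) / 2) * ∫ x, g x :=
        mul_le_mul_of_nonneg_left hle (Real.rpow_nonneg hA.le _)
    _ = Eψ := hEψ.symm
end
end

section
/- Under Assumption A, let k ∈ ℕ, λ > 0, ρ ∈ (0,1), and x_k ∈ ℝ^d. Then the second moment of ψ_k under the Gaussian measure N(x_k, ρ^k λ^{−1} I_d) satisfies the upper bound E[ψ_k²] ≤ exp(−2ρ^{−k} f*) · (λ/(2l+λ))^{d/2} · exp(−ρ^{−k} lλ‖x_k − x*‖₂² / (2l+λ)). -/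
open MeasureTheory Real

noncomputable section

lemma sq_norm_combo {E : Type*} [NormedAddCommGroup E] [InnerProductSpace ℝ E]
    (a b : ℝ) (ha : 0 < a) (hb : 0 < b) (x y z : E) :
    a * ‖x - y‖ ^ 2 + b * ‖x - z‖ ^ 2 =
      (a + b) * ‖x - ((a / (a + b)) • y + (b / (a + b)) • z)‖ ^ 2 +
        (a * b / (a + b)) * ‖y - z‖ ^ 2 := by
  have hc : (0 : ℝ) < a + b := by linarith
  have hm : x - ((a / (a + b)) • y + (b / (a + b)) • z)
      = (a / (a + b)) • (x - y) + (b / (a + b)) • (x - z) := by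
    have h1 : (a / (a + b)) + (b / (a + b)) = 1 := by field_simp
    rw [smul_sub, smul_sub, ← add_sub_assoc]
    rw [show (a / (a + b)) • x - (a / (a + b)) • y + (b / (a + b)) • x
        = ((a / (a + b)) + (b / (a + b))) • x - (a / (a + b)) • y by
      rw [add_smul]; abel]
    rw [h1, one_smul]; abel
  have hyz : y - z = (x - z) - (x - y) := by abel
  set u := x - y
  set v := x - z
  rw [hm, hyz]
  have h1 : ‖(a / (a + b)) • u + (b / (a + b)) • v‖ ^ 2 =
      (a / (a + b)) ^ 2 * ‖u‖ ^ 2 + 2 * ((a / (a + b)) * (b / (a + b)) * inner ℝ u v) +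
        (b / (a + b)) ^ 2 * ‖v‖ ^ 2 := by
    rw [@norm_add_sq_real]
    rw [real_inner_smul_left, real_inner_smul_right, norm_smul, norm_smul]
    rw [Real.norm_eq_abs, Real.norm_eq_abs, abs_of_pos (div_pos ha hc),
      abs_of_pos (div_pos hb hc)]
    ring
  have h2 : ‖v - u‖ ^ 2 = ‖v‖ ^ 2 - 2 * inner ℝ u v + ‖u‖ ^ 2 := by
    rw [@norm_sub_sq_real, real_inner_comm]
  rw [h1, h2]
  field_simp
  ring

lemma integrable_rexp_neg_mul_sq_norm {E : Type*} [NormedAddCommGroup E]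
    [InnerProductSpace ℝ E] [FiniteDimensional ℝ E] [MeasurableSpace E] [BorelSpace E]
    {c : ℝ} (hc : 0 < c) :
    Integrable (fun v : E => Real.exp (-c * ‖v‖ ^ 2)) := by
  have h := (GaussianFourier.integrable_cexp_neg_mul_sq_norm_add (V := E)
    (b := (c : ℂ)) (by simpa using hc) 0 (0 : E)).norm
  simpa [Complex.norm_exp, ← Complex.ofReal_pow] using h

/-- Upper bound for `E[ψ_k²]` (from the proof of Lemma 3.4). -/
theorem Epsi_sq_upper_bound
    (d : ℕ) (hd : 1 ≤ d)
    (f : EuclideanSpace ℝ (Fin d) → ℝ) (hf : Measurable f)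
    (xs : EuclideanSpace ℝ (Fin d)) (l L : ℝ) (hl : 0 < l) (hlL : l ≤ L)
    (hlow : ∀ x, f xs + l / 2 * ‖x - xs‖ ^ 2 ≤ f x)
    (hup : ∀ x, f x ≤ f xs + L / 2 * ‖x - xs‖ ^ 2)
    (k : ℕ) (lam ρ : ℝ) (hlam : 0 < lam) (hρ0 : 0 < ρ) (hρ1 : ρ < 1)
    (xk : EuclideanSpace ℝ (Fin d))
    (Eψ2 : ℝ)
    (hEψ2 : Eψ2 = ((ρ ^ k)⁻¹ * lam / (2 * π)) ^ ((d : ℝ) / 2) *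
      ∫ x : EuclideanSpace ℝ (Fin d),
        Real.exp (-(2 * (ρ ^ k)⁻¹ * f x)) *
          Real.exp (-((ρ ^ k)⁻¹ * lam * ‖x - xk‖ ^ 2 / 2))) :
    Eψ2 ≤ Real.exp (-(2 * (ρ ^ k)⁻¹ * f xs)) * (lam / (2 * l + lam)) ^ ((d : ℝ) / 2) *
        Real.exp (-((ρ ^ k)⁻¹ * l * lam * ‖xk - xs‖ ^ 2 / (2 * l + lam))) := by
  set α : ℝ := (ρ ^ k)⁻¹ with hαdef
  have hα : 0 < α := by positivity
  set a : ℝ := α * l with hadef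
  set b : ℝ := α * lam / 2 with hbdef
  have ha : 0 < a := by positivity
  have hb : 0 < b := by positivity
  have hc : 0 < a + b := by linarith
  set m : EuclideanSpace ℝ (Fin d) := (a / (a + b)) • xs + (b / (a + b)) • xk with hmdef
  -- pointwise bound
  have hpt : ∀ x : EuclideanSpace ℝ (Fin d),
      Real.exp (-(2 * α * f x)) * Real.exp (-(α * lam * ‖x - xk‖ ^ 2 / 2)) ≤
      Real.exp (-(2 * α * f xs)) * (Real.exp (-(a * b / (a + b) * ‖xs - xk‖ ^ 2)) *
        Real.exp (-((a + b) * ‖x - m‖ ^ 2))) := by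
    intro x
    rw [← Real.exp_add, ← Real.exp_add, ← Real.exp_add]
    apply Real.exp_le_exp.2
    have hid := sq_norm_combo a b ha hb x xs xk
    have hlx := hlow x
    nlinarith [mul_le_mul_of_nonneg_left hlx (le_of_lt (mul_pos two_pos hα))]
  -- integrability of the bound
  have hint0 : Integrable (fun x : EuclideanSpace ℝ (Fin d) =>
      Real.exp (-(a + b) * ‖x‖ ^ 2)) := integrable_rexp_neg_mul_sq_norm hc
  have hint1 : Integrable (fun x : EuclideanSpace ℝ (Fin d) =>
      Real.exp (-((a + b) * ‖x - m‖ ^ 2))) := by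
    have h := hint0.comp_sub_right m
    simp only [neg_mul] at h ⊢
    exact h
  have hint : Integrable (fun x : EuclideanSpace ℝ (Fin d) =>
      Real.exp (-(2 * α * f xs)) * (Real.exp (-(a * b / (a + b) * ‖xs - xk‖ ^ 2)) *
        Real.exp (-((a + b) * ‖x - m‖ ^ 2)))) := (hint1.const_mul _).const_mul _
  -- bound the integral
  have hI : (∫ x : EuclideanSpace ℝ (Fin d),
        Real.exp (-(2 * α * f x)) * Real.exp (-(α * lam * ‖x - xk‖ ^ 2 / 2))) ≤
      ∫ x : EuclideanSpace ℝ (Fin d),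
        Real.exp (-(2 * α * f xs)) * (Real.exp (-(a * b / (a + b) * ‖xs - xk‖ ^ 2)) *
          Real.exp (-((a + b) * ‖x - m‖ ^ 2))) := by
    apply integral_mono_of_nonneg
    · filter_upwards with x
      positivity
    · exact hint
    · filter_upwards with x using hpt x
  -- compute the gaussian integral
  have hgauss : (∫ x : EuclideanSpace ℝ (Fin d),
      Real.exp (-((a + b) * ‖x - m‖ ^ 2))) = (π / (a + b)) ^ ((d : ℝ) / 2) := by
    have h1 : (∫ x : EuclideanSpace ℝ (Fin d), Real.exp (-((a + b) * ‖x - m‖ ^ 2)))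
        = ∫ x : EuclideanSpace ℝ (Fin d), Real.exp (-(a + b) * ‖x‖ ^ 2) := by
      rw [← integral_sub_right_eq_self
        (fun x : EuclideanSpace ℝ (Fin d) => Real.exp (-(a + b) * ‖x‖ ^ 2)) m]
      simp only [neg_mul]
    rw [h1, GaussianFourier.integral_rexp_neg_mul_sq_norm hc]
    congr 1
    simp [finrank_euclideanSpace_fin]
  have hIval : (∫ x : EuclideanSpace ℝ (Fin d),
        Real.exp (-(2 * α * f xs)) * (Real.exp (-(a * b / (a + b) * ‖xs - xk‖ ^ 2)) *
          Real.exp (-((a + b) * ‖x - m‖ ^ 2)))) =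
      Real.exp (-(2 * α * f xs)) * (Real.exp (-(a * b / (a + b) * ‖xs - xk‖ ^ 2)) *
        (π / (a + b)) ^ ((d : ℝ) / 2)) := by
    rw [integral_const_mul, integral_const_mul, hgauss]
  -- put everything together
  have hK : (0 : ℝ) ≤ (α * lam / (2 * π)) ^ ((d : ℝ) / 2) := by positivity
  have hEle : Eψ2 ≤ (α * lam / (2 * π)) ^ ((d : ℝ) / 2) *
      (Real.exp (-(2 * α * f xs)) * (Real.exp (-(a * b / (a + b) * ‖xs - xk‖ ^ 2)) *
        (π / (a + b)) ^ ((d : ℝ) / 2))) := by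
    rw [hEψ2, ← hIval]
    exact mul_le_mul_of_nonneg_left hI hK
  refine hEle.trans_eq ?_
  have hπ : (0 : ℝ) < π := Real.pi_pos
  have hpow : (α * lam / (2 * π)) ^ ((d : ℝ) / 2) * (π / (a + b)) ^ ((d : ℝ) / 2)
      = (lam / (2 * l + lam)) ^ ((d : ℝ) / 2) := by
    rw [← Real.mul_rpow (by positivity) (by positivity)]
    congr 1
    rw [hadef, hbdef]
    field_simp
  have hexp : -(a * b / (a + b) * ‖xs - xk‖ ^ 2)
      = -(α * l * lam * ‖xk - xs‖ ^ 2 / (2 * l + lam)) := by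
    rw [norm_sub_rev]
    rw [hadef, hbdef]
    have h2l : (2 : ℝ) * l + lam ≠ 0 := by positivity
    field_simp
  calc (α * lam / (2 * π)) ^ ((d : ℝ) / 2) *
      (Real.exp (-(2 * α * f xs)) * (Real.exp (-(a * b / (a + b) * ‖xs - xk‖ ^ 2)) *
        (π / (a + b)) ^ ((d : ℝ) / 2)))
      = Real.exp (-(2 * α * f xs)) *
        ((α * lam / (2 * π)) ^ ((d : ℝ) / 2) * (π / (a + b)) ^ ((d : ℝ) / 2)) *
        Real.exp (-(a * b / (a + b) * ‖xs - xk‖ ^ 2)) := by ring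
    _ = _ := by rw [hpow, hexp]
end
end

section
/- Under Assumption A, let k ∈ ℕ, λ > 0, ρ ∈ (0,1), and x_k ∈ ℝ^d. Then the second moment of φ_k under the Gaussian measure N(x_k, ρ^k λ^{−1} I_d) satisfies the upper bound E[φ_k²] ≤ exp(−2ρ^{−k} f*) · (λ/(2l+λ))^{d/2} · exp(−ρ^{−k} lλ‖x_k − x*‖₂² / (2l+λ)) · (ρ^k d/(2l+λ) + λ²‖x_k − x*‖₂²/(2l+λ)²). -/
open MeasureTheory Real

noncomputable section

open scoped RealInnerProductSpace

namespace EphiAux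

lemma int1d {c : ℝ} (hc : 0 < c) :
    ∫ x : ℝ, x ^ 2 * Real.exp (-(c * x ^ 2)) = (2 * c)⁻¹ * Real.sqrt (π / c) := by
  have h1 : (fun x : ℝ => x ^ 2 * Real.exp (-(c * x ^ 2)))
      = fun x : ℝ => |x| ^ 2 * Real.exp (-(c * |x| ^ 2)) := by
    funext x; rw [sq_abs]
  rw [h1, integral_comp_abs (f := fun t : ℝ => t ^ 2 * Real.exp (-(c * t ^ 2)))]
  have h2 : ∫ x in Set.Ioi (0:ℝ), x ^ 2 * Real.exp (-(c * x ^ 2))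
      = ∫ x in Set.Ioi (0:ℝ), x ^ (2:ℝ) * Real.exp (-c * x ^ (2:ℝ)) := by
    refine setIntegral_congr_fun measurableSet_Ioi (fun x hx => ?_)
    rw [← Real.rpow_natCast x 2]
    norm_num
  rw [h2, integral_rpow_mul_exp_neg_mul_rpow (by norm_num) (by norm_num) hc]
  have hG : Real.Gamma ((2 + 1) / 2) = Real.sqrt π / 2 := by
    have : ((2:ℝ) + 1) / 2 = 1/2 + 1 := by norm_num
    rw [this, Real.Gamma_add_one (by norm_num), Real.Gamma_one_half_eq]
    ring
  have hcr : c ^ (-(2 + 1) / 2 : ℝ) = (c * Real.sqrt c)⁻¹ := by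
    rw [show (-(2+1)/2 : ℝ) = -(1 + 1/2) by norm_num, Real.rpow_neg hc.le,
      Real.rpow_add hc, Real.rpow_one, ← Real.sqrt_eq_rpow]
  have hsc : Real.sqrt c ≠ 0 := ne_of_gt (Real.sqrt_pos.mpr hc)
  rw [hG, hcr, Real.sqrt_div (by positivity) c]
  field_simp

lemma norm_symm_sq {d : ℕ} (y : Fin d → ℝ) :
    ‖((MeasurableEquiv.toLp 2 (Fin d → ℝ)).symm).symm y‖ ^ 2 = ∑ i, y i ^ 2 := by
  rw [EuclideanSpace.norm_eq, Real.sq_sqrt (by positivity)]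
  simp

lemma hint2 {c : ℝ} (hc : 0 < c) :
    Integrable (fun t : ℝ => Real.exp (-(c * t ^ 2))) := by
  simpa [neg_mul] using integrable_exp_neg_mul_sq hc

lemma hint1 {c : ℝ} (hc : 0 < c) :
    Integrable (fun t : ℝ => t ^ 2 * Real.exp (-(c * t ^ 2))) := by
  have := integrable_rpow_mul_exp_neg_mul_sq hc (s := 2) (by norm_num)
  refine this.congr (Filter.Eventually.of_forall fun t => ?_)
  show t ^ (2:ℝ) * Real.exp (-c * t ^ 2) = t ^ 2 * Real.exp (-(c * t ^ 2))
  rw [← Real.rpow_natCast t 2]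
  norm_num

lemma intA {d : ℕ} {c : ℝ} (hc : 0 < c) :
    Integrable (fun v : EuclideanSpace ℝ (Fin d) => Real.exp (-(c * ‖v‖ ^ 2))) := by
  rw [← MeasurePreserving.integrable_comp_emb
    (EuclideanSpace.volume_preserving_symm_measurableEquiv_toLp (Fin d)).symm
    (MeasurableEquiv.measurableEmbedding _)]
  have : ((fun v : EuclideanSpace ℝ (Fin d) => Real.exp (-(c * ‖v‖ ^ 2))) ∘
      ((MeasurableEquiv.toLp 2 (Fin d → ℝ)).symm).symm)
      = fun y : Fin d → ℝ => ∏ i, Real.exp (-(c * y i ^ 2)) := by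
    funext y
    simp only [Function.comp_apply, norm_symm_sq, ← Real.exp_sum]
    congr 1
    simp [Finset.mul_sum]
  rw [this]
  exact Integrable.fintype_prod (fun _ => hint2 hc)

lemma intB {d : ℕ} {c : ℝ} (hc : 0 < c) :
    Integrable (fun v : EuclideanSpace ℝ (Fin d) => ‖v‖ ^ 2 * Real.exp (-(c * ‖v‖ ^ 2))) := by
  rw [← MeasurePreserving.integrable_comp_emb
    (EuclideanSpace.volume_preserving_symm_measurableEquiv_toLp (Fin d)).symm
    (MeasurableEquiv.measurableEmbedding _)]
  have : ((fun v : EuclideanSpace ℝ (Fin d) => ‖v‖ ^ 2 * Real.exp (-(c * ‖v‖ ^ 2))) ∘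
      ((MeasurableEquiv.toLp 2 (Fin d → ℝ)).symm).symm)
      = fun y : Fin d → ℝ =>
        ∑ i, ∏ j, ((if j = i then (y j) ^ 2 else 1) * Real.exp (-(c * y j ^ 2))) := by
    funext y
    simp only [Function.comp_apply, norm_symm_sq]
    rw [Finset.sum_mul]
    refine Finset.sum_congr rfl (fun i _ => ?_)
    rw [Finset.prod_mul_distrib, Finset.prod_ite_eq', ← Real.exp_sum]
    simp only [Finset.mem_univ, if_true]
    congr 1
    simp [Finset.mul_sum]
  rw [this]
  refine integrable_finset_sum _ (fun i _ => ?_)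
  refine MeasureTheory.Integrable.fintype_prod
    (f := fun j t => (if j = i then t ^ 2 else 1) * Real.exp (-(c * t ^ 2))) (fun j => ?_)
  by_cases h : j = i <;> simp [h, hint1 hc, hint2 hc]

lemma intdd {d : ℕ} {c : ℝ} (hc : 0 < c) :
    ∫ v : EuclideanSpace ℝ (Fin d), ‖v‖ ^ 2 * Real.exp (-(c * ‖v‖ ^ 2))
      = ((d : ℝ) / (2 * c)) * (π / c) ^ ((d : ℝ) / 2) := by
  have hmp := (EuclideanSpace.volume_preserving_symm_measurableEquiv_toLp (Fin d)).symm
  rw [← hmp.integral_comp']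
  simp_rw [norm_symm_sq]
  have key : ∀ y : Fin d → ℝ, (∑ i, y i ^ 2) * Real.exp (-(c * ∑ i, y i ^ 2))
      = ∑ i, ∏ j, ((if j = i then (y j) ^ 2 else 1) * Real.exp (-(c * y j ^ 2))) := by
    intro y
    rw [Finset.sum_mul]
    refine Finset.sum_congr rfl (fun i _ => ?_)
    rw [Finset.prod_mul_distrib, Finset.prod_ite_eq', ← Real.exp_sum]
    simp only [Finset.mem_univ, if_true]
    congr 1
    simp [Finset.mul_sum]
  simp_rw [key]
  have hintg : ∀ i j : Fin d, Integrable
      (fun t : ℝ => (if j = i then t ^ 2 else 1) * Real.exp (-(c * t ^ 2))) := by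
    intro i j
    by_cases h : j = i <;> simp [h, hint1 hc, hint2 hc]
  erw [integral_finset_sum _ (fun i _ => MeasureTheory.Integrable.fintype_prod
      (f := fun j t => (if j = i then t ^ 2 else 1) * Real.exp (-(c * t ^ 2)))
      (fun j => hintg i j))]
  have hval : ∀ i j : Fin d, (∫ t : ℝ, (if j = i then t ^ 2 else 1) * Real.exp (-(c * t ^ 2)))
      = (if j = i then (2 * c)⁻¹ else 1) * Real.sqrt (π / c) := by
    intro i j
    by_cases h : j = i
    · simp only [h, if_true]
      exact int1d hc
    · simp only [h, if_false, one_mul]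
      simpa [neg_mul] using integral_gaussian c
  have hterm : ∀ i : Fin d,
      (∫ y : Fin d → ℝ, ∏ j, ((if j = i then (y j) ^ 2 else 1) * Real.exp (-(c * y j ^ 2))))
        = (2 * c)⁻¹ * Real.sqrt (π / c) ^ d := by
    intro i
    erw [MeasureTheory.integral_fintype_prod_eq_prod (ι := Fin d)
      (fun j t => (if j = i then t ^ 2 else 1) * Real.exp (-(c * t ^ 2)))]
    simp_rw [hval]
    rw [Finset.prod_mul_distrib, Finset.prod_ite_eq', Finset.prod_const]
    simp [Finset.card_univ]
  simp_rw [← volume_pi, hterm]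
  rw [Finset.sum_const, Finset.card_univ]
  have hsq : Real.sqrt (π / c) ^ d = (π / c) ^ ((d : ℝ) / 2) := by
    rw [Real.sqrt_eq_rpow, ← Real.rpow_natCast ((π / c) ^ ((1:ℝ)/2)) d,
      ← Real.rpow_mul (by positivity)]
    norm_num
    ring_nf
  rw [hsq]
  simp [Fintype.card_fin, nsmul_eq_mul]
  ring

lemma intI0 {d : ℕ} {c : ℝ} (hc : 0 < c) :
    ∫ v : EuclideanSpace ℝ (Fin d), Real.exp (-(c * ‖v‖ ^ 2))
      = (π / c) ^ ((d : ℝ) / 2) := by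
  have := GaussianFourier.integral_rexp_neg_mul_sq_norm (V := EuclideanSpace ℝ (Fin d)) hc
  simp only [finrank_euclideanSpace_fin] at this
  simpa [neg_mul] using this


lemma intOdd {d : ℕ} {c : ℝ} (w : EuclideanSpace ℝ (Fin d)) :
    ∫ y : EuclideanSpace ℝ (Fin d), (2 * ⟪y, w⟫) * Real.exp (-(c * ‖y‖ ^ 2)) = 0 := by
  have h := MeasureTheory.integral_neg_eq_self
    (fun y : EuclideanSpace ℝ (Fin d) => (2 * ⟪y, w⟫) * Real.exp (-(c * ‖y‖ ^ 2))) volume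
  simp only [inner_neg_left, norm_neg, mul_neg, neg_mul] at h
  rw [MeasureTheory.integral_neg] at h
  linarith

lemma intJ {d : ℕ} {c : ℝ} (hc : 0 < c) (w : EuclideanSpace ℝ (Fin d)) :
    Integrable (fun y : EuclideanSpace ℝ (Fin d) =>
      (2 * ⟪y, w⟫) * Real.exp (-(c * ‖y‖ ^ 2))) := by
  have hbound : Integrable (fun y : EuclideanSpace ℝ (Fin d) =>
      ‖y‖ ^ 2 * Real.exp (-(c * ‖y‖ ^ 2)) + ‖w‖ ^ 2 * Real.exp (-(c * ‖y‖ ^ 2))) :=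
    (intB hc).add ((intA hc).const_mul _)
  refine hbound.mono' ?_ (Filter.Eventually.of_forall fun y => ?_)
  · refine Continuous.aestronglyMeasurable ?_
    exact ((continuous_const.mul ((continuous_id.inner continuous_const))).mul
      ((continuous_const.mul ((continuous_norm).pow 2)).neg.rexp))
  · have h1 : |2 * ⟪y, w⟫| ≤ ‖y‖ ^ 2 + ‖w‖ ^ 2 := by
      have h2 : |⟪y, w⟫| ≤ ‖y‖ * ‖w‖ := abs_real_inner_le_norm y w
      rw [abs_mul, abs_two]
      nlinarith [sq_nonneg (‖y‖ - ‖w‖)]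
    have hE : (0:ℝ) ≤ Real.exp (-(c * ‖y‖ ^ 2)) := (Real.exp_pos _).le
    calc ‖(2 * ⟪y, w⟫) * Real.exp (-(c * ‖y‖ ^ 2))‖
        = |2 * ⟪y, w⟫| * Real.exp (-(c * ‖y‖ ^ 2)) := by
          rw [norm_mul, Real.norm_eq_abs, Real.norm_eq_abs, Real.abs_exp]
      _ ≤ (‖y‖ ^ 2 + ‖w‖ ^ 2) * Real.exp (-(c * ‖y‖ ^ 2)) :=
          mul_le_mul_of_nonneg_right h1 hE
      _ = ‖y‖ ^ 2 * Real.exp (-(c * ‖y‖ ^ 2)) + ‖w‖ ^ 2 * Real.exp (-(c * ‖y‖ ^ 2)) := by ring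

lemma intShift {d : ℕ} {c : ℝ} (hc : 0 < c) (w : EuclideanSpace ℝ (Fin d)) :
    ∫ y : EuclideanSpace ℝ (Fin d), ‖y + w‖ ^ 2 * Real.exp (-(c * ‖y‖ ^ 2))
      = ((d : ℝ) / (2 * c) + ‖w‖ ^ 2) * (π / c) ^ ((d : ℝ) / 2) := by
  have hexpand : (fun y : EuclideanSpace ℝ (Fin d) => ‖y + w‖ ^ 2 * Real.exp (-(c * ‖y‖ ^ 2)))
      = fun y => (‖y‖ ^ 2 * Real.exp (-(c * ‖y‖ ^ 2))
        + (2 * ⟪y, w⟫) * Real.exp (-(c * ‖y‖ ^ 2)))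
        + ‖w‖ ^ 2 * Real.exp (-(c * ‖y‖ ^ 2)) := by
    funext y
    rw [norm_add_sq_real]
    ring
  rw [hexpand]
  rw [MeasureTheory.integral_add
    (f := fun y : EuclideanSpace ℝ (Fin d) => ‖y‖ ^ 2 * Real.exp (-(c * ‖y‖ ^ 2))
      + (2 * ⟪y, w⟫) * Real.exp (-(c * ‖y‖ ^ 2)))
    (g := fun y : EuclideanSpace ℝ (Fin d) => ‖w‖ ^ 2 * Real.exp (-(c * ‖y‖ ^ 2)))
    ((intB hc).add (intJ hc w)) ((intA hc).const_mul _)]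
  rw [MeasureTheory.integral_add (intB hc) (intJ hc w), intOdd, intdd hc,
    MeasureTheory.integral_const_mul, intI0 hc]
  ring

lemma shiftfun {d : ℕ} {c : ℝ} (xs w : EuclideanSpace ℝ (Fin d)) (y : EuclideanSpace ℝ (Fin d)) :
    ‖y + (xs + w) - xs‖ ^ 2 * Real.exp (-(c * ‖y + (xs + w) - (xs + w)‖ ^ 2))
      = ‖y + w‖ ^ 2 * Real.exp (-(c * ‖y‖ ^ 2)) := by
  have h1 : y + (xs + w) - xs = y + w := by abel
  have h2 : y + (xs + w) - (xs + w) = y := by abel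
  rw [h1, h2]

lemma intTrans {d : ℕ} {c : ℝ} (hc : 0 < c) (xs w : EuclideanSpace ℝ (Fin d)) :
    ∫ x : EuclideanSpace ℝ (Fin d), ‖x - xs‖ ^ 2 * Real.exp (-(c * ‖x - (xs + w)‖ ^ 2))
      = ((d : ℝ) / (2 * c) + ‖w‖ ^ 2) * (π / c) ^ ((d : ℝ) / 2) := by
  rw [← MeasureTheory.integral_add_right_eq_self
    (fun x : EuclideanSpace ℝ (Fin d) => ‖x - xs‖ ^ 2 * Real.exp (-(c * ‖x - (xs + w)‖ ^ 2)))
    (xs + w)]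
  simp only [shiftfun xs w]
  exact intShift hc w

lemma intTransIntegrable {d : ℕ} {c : ℝ} (hc : 0 < c) (xs w : EuclideanSpace ℝ (Fin d)) :
    Integrable (fun x : EuclideanSpace ℝ (Fin d) =>
      ‖x - xs‖ ^ 2 * Real.exp (-(c * ‖x - (xs + w)‖ ^ 2))) := by
  have hG : Integrable (fun y : EuclideanSpace ℝ (Fin d) =>
      ‖y + w‖ ^ 2 * Real.exp (-(c * ‖y‖ ^ 2))) := by
    have hexpand : (fun y : EuclideanSpace ℝ (Fin d) => ‖y + w‖ ^ 2 * Real.exp (-(c * ‖y‖ ^ 2)))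
        = fun y => (‖y‖ ^ 2 * Real.exp (-(c * ‖y‖ ^ 2))
          + (2 * ⟪y, w⟫) * Real.exp (-(c * ‖y‖ ^ 2)))
          + ‖w‖ ^ 2 * Real.exp (-(c * ‖y‖ ^ 2)) := by
      funext y
      rw [norm_add_sq_real]
      ring
    rw [hexpand]
    exact ((intB hc).add (intJ hc w)).add ((intA hc).const_mul _)
  have := hG.comp_add_right (-(xs + w))
  refine this.congr (Filter.Eventually.of_forall fun x => ?_)
  have h1 : x + -(xs + w) + w = x - xs := by abel
  have h2 : x + -(xs + w) = x - (xs + w) := by abel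
  simp only [h1, h2]
  have h3 : x - (xs + w) + w = x - xs := by abel
  rw [h3]

end EphiAux

open EphiAux

/-- Upper bound for `E[φ_k²]` (from the proof of Lemma 3.4). -/
theorem Ephi_sq_upper_bound
    (d : ℕ) (hd : 1 ≤ d)
    (f : EuclideanSpace ℝ (Fin d) → ℝ) (hf : Measurable f)
    (xs : EuclideanSpace ℝ (Fin d)) (l L : ℝ) (hl : 0 < l) (hlL : l ≤ L)
    (hlow : ∀ x, f xs + l / 2 * ‖x - xs‖ ^ 2 ≤ f x)
    (hup : ∀ x, f x ≤ f xs + L / 2 * ‖x - xs‖ ^ 2)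
    (k : ℕ) (lam ρ : ℝ) (hlam : 0 < lam) (hρ0 : 0 < ρ) (hρ1 : ρ < 1)
    (xk : EuclideanSpace ℝ (Fin d))
    (Eφ2 : ℝ)
    (hEφ2 : Eφ2 = ((ρ ^ k)⁻¹ * lam / (2 * π)) ^ ((d : ℝ) / 2) *
      ∫ x : EuclideanSpace ℝ (Fin d),
        ‖x - xs‖ ^ 2 * Real.exp (-(2 * (ρ ^ k)⁻¹ * f x)) *
          Real.exp (-((ρ ^ k)⁻¹ * lam * ‖x - xk‖ ^ 2 / 2))) :
    Eφ2 ≤ Real.exp (-(2 * (ρ ^ k)⁻¹ * f xs)) * (lam / (2 * l + lam)) ^ ((d : ℝ) / 2) *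
        Real.exp (-((ρ ^ k)⁻¹ * l * lam * ‖xk - xs‖ ^ 2 / (2 * l + lam))) *
        (ρ ^ k * d / (2 * l + lam) + lam ^ 2 * ‖xk - xs‖ ^ 2 / (2 * l + lam) ^ 2) := by

  have hρk : (0:ℝ) < ρ ^ k := pow_pos hρ0 k
  set β : ℝ := (ρ ^ k)⁻¹ with hβdef
  have hβ : 0 < β := inv_pos.mpr hρk
  have hs : (0:ℝ) < 2 * l + lam := by linarith
  set s : ℝ := 2 * l + lam with hsdef
  set c : ℝ := β * s / 2 with hcdef
  have hc : 0 < c := by rw [hcdef]; positivity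
  set w : EuclideanSpace ℝ (Fin d) := (lam / s) • (xk - xs) with hwdef
  set K : ℝ := β * l * lam * ‖xk - xs‖ ^ 2 / s with hKdef
  set D : ℝ := Real.exp (-(2 * β * f xs)) * Real.exp (-K) with hDdef
  -- key exponent identity
  have hkey : ∀ x : EuclideanSpace ℝ (Fin d),
      -(2 * β * (f xs + l / 2 * ‖x - xs‖ ^ 2)) + -(β * lam * ‖x - xk‖ ^ 2 / 2)
        = (-(2 * β * f xs) + -K) + -(c * ‖x - (xs + w)‖ ^ 2) := by
    intro x
    have hxk : x - xk = (x - xs) - (xk - xs) := by abel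
    have e1 : ‖x - xk‖ ^ 2
        = ‖x - xs‖ ^ 2 - 2 * ⟪x - xs, xk - xs⟫ + ‖xk - xs‖ ^ 2 := by
      rw [hxk]; exact norm_sub_sq_real _ _
    have hxm : x - (xs + w) = (x - xs) - (lam / s) • (xk - xs) := by
      rw [hwdef]; abel
    have e2 : ‖x - (xs + w)‖ ^ 2
        = ‖x - xs‖ ^ 2 - 2 * ((lam / s) * ⟪x - xs, xk - xs⟫)
          + (lam / s) ^ 2 * ‖xk - xs‖ ^ 2 := by
      rw [hxm, norm_sub_sq_real, real_inner_smul_right, norm_smul, mul_pow, Real.norm_eq_abs, sq_abs]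
    rw [e1, e2, hKdef, hcdef]
    field_simp
    ring
  -- pointwise bound
  have hpt : ∀ x : EuclideanSpace ℝ (Fin d),
      ‖x - xs‖ ^ 2 * Real.exp (-(2 * β * f x)) * Real.exp (-(β * lam * ‖x - xk‖ ^ 2 / 2))
        ≤ D * (‖x - xs‖ ^ 2 * Real.exp (-(c * ‖x - (xs + w)‖ ^ 2))) := by
    intro x
    have hle : -(2 * β * f x) + -(β * lam * ‖x - xk‖ ^ 2 / 2)
        ≤ (-(2 * β * f xs) + -K) + -(c * ‖x - (xs + w)‖ ^ 2) := by
      rw [← hkey x]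
      have h1 : -(2 * β * f x) ≤ -(2 * β * (f xs + l / 2 * ‖x - xs‖ ^ 2)) := by
        have := hlow x
        nlinarith
      linarith
    calc ‖x - xs‖ ^ 2 * Real.exp (-(2 * β * f x)) * Real.exp (-(β * lam * ‖x - xk‖ ^ 2 / 2))
        = ‖x - xs‖ ^ 2 * Real.exp (-(2 * β * f x) + -(β * lam * ‖x - xk‖ ^ 2 / 2)) := by
          rw [Real.exp_add]; ring
      _ ≤ ‖x - xs‖ ^ 2 * Real.exp ((-(2 * β * f xs) + -K) + -(c * ‖x - (xs + w)‖ ^ 2)) := by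
          exact mul_le_mul_of_nonneg_left (Real.exp_le_exp.mpr hle) (by positivity)
      _ = D * (‖x - xs‖ ^ 2 * Real.exp (-(c * ‖x - (xs + w)‖ ^ 2))) := by
          rw [hDdef, Real.exp_add, Real.exp_add]; ring
  -- integral bound
  have hmono : (∫ x : EuclideanSpace ℝ (Fin d),
      ‖x - xs‖ ^ 2 * Real.exp (-(2 * β * f x)) * Real.exp (-(β * lam * ‖x - xk‖ ^ 2 / 2)))
      ≤ D * (((d : ℝ) / (2 * c) + ‖w‖ ^ 2) * (π / c) ^ ((d : ℝ) / 2)) := by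
    rw [← intTrans hc xs w, ← MeasureTheory.integral_const_mul]
    exact integral_mono_of_nonneg (Filter.Eventually.of_forall fun x => by positivity)
      ((intTransIntegrable hc xs w).const_mul D) (Filter.Eventually.of_forall hpt)
  have hP : (0:ℝ) ≤ (β * lam / (2 * π)) ^ ((d : ℝ) / 2) :=
    Real.rpow_nonneg (by positivity) _
  rw [hEφ2]
  refine le_trans (mul_le_mul_of_nonneg_left hmono hP) (le_of_eq ?_)
  -- final algebraic identity
  have hw2 : ‖w‖ ^ 2 = (lam / s) ^ 2 * ‖xk - xs‖ ^ 2 := by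
    rw [hwdef, norm_smul, mul_pow, Real.norm_eq_abs, sq_abs]
  have hβinv : β⁻¹ = ρ ^ k := by rw [hβdef, inv_inv]
  have h1 : (d : ℝ) / (2 * c) + ‖w‖ ^ 2
      = ρ ^ k * d / s + lam ^ 2 * ‖xk - xs‖ ^ 2 / s ^ 2 := by
    rw [hw2, hcdef, ← hβinv]
    field_simp
  have hPpi : (β * lam / (2 * π)) ^ ((d : ℝ) / 2) * (π / c) ^ ((d : ℝ) / 2)
      = (lam / s) ^ ((d : ℝ) / 2) := by
    rw [← Real.mul_rpow (by positivity) (by positivity)]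
    congr 1
    rw [hcdef]
    field_simp [Real.pi_ne_zero]
  rw [hDdef, h1, ← hPpi]
  ring
end
end

section
/- Under Assumption A, let k ∈ ℕ, λ > 0, ρ ∈ (0,1), M > 0, and x_k ∈ ℝ^d with ‖x_k − x*‖₂² ≤ ρ^k M, and define m_k² = (ρ^{−k}λ/(2π))^{d/2} ∫_{ℝ^d} (f(x) − f*)² exp(−(ρ^{−k}λ/2)‖x − x_k‖₂²) dx. Then m_k > 0 and c ρ^{−k} ≤ m_k^{−1} ≤ C ρ^{−k}, where c = 2λ/(L d √(3 + 6Mλ + M²λ²)) and C = 2λ/(l √(3d)). -/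
open MeasureTheory Real

noncomputable section

lemma gauss_int_pow {b : ℝ} (hb : 0 < b) (n : ℕ) :
    Integrable (fun x : ℝ => x ^ n * Real.exp (-b * x ^ 2)) := by
  have h := integrable_rpow_mul_exp_neg_mul_sq hb (s := (n : ℝ))
    (by exact_mod_cast neg_one_lt_zero.trans_le (Nat.cast_nonneg n))
  simpa [Real.rpow_natCast] using h

lemma gauss_odd {b : ℝ} (n : ℕ) (hn : Odd n) :
    ∫ x : ℝ, x ^ n * Real.exp (-b * x ^ 2) = 0 := by
  have h := MeasureTheory.integral_neg_eq_self (fun x : ℝ => x ^ n * Real.exp (-b * x ^ 2)) volume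
  have h2 : (∫ x : ℝ, (-x) ^ n * Real.exp (-b * (-x) ^ 2))
      = ∫ x : ℝ, -(x ^ n * Real.exp (-b * x ^ 2)) := by
    congr 1 with x
    rw [hn.neg_pow, neg_sq]; ring
  rw [h2, integral_neg] at h
  linarith

lemma gauss_m2 {b : ℝ} (hb : 0 < b) :
    ∫ x : ℝ, x ^ 2 * Real.exp (-b * x ^ 2) = (2 * b)⁻¹ * Real.sqrt (π / b) := by
  have habs : (fun x : ℝ => x ^ 2 * Real.exp (-b * x ^ 2))
      = fun x : ℝ => |x| ^ 2 * Real.exp (-b * |x| ^ 2) := by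
    funext x; rw [sq_abs]
  rw [habs, integral_comp_abs (f := fun x : ℝ => x ^ 2 * Real.exp (-b * x ^ 2))]
  have h := integral_rpow_mul_exp_neg_mul_rpow (p := 2) (q := 2) (by norm_num) (by norm_num) hb
  have hcast : ∀ x ∈ Set.Ioi (0:ℝ), x ^ (2:ℝ) * Real.exp (-b * x ^ (2:ℝ))
      = x ^ 2 * Real.exp (-b * x ^ 2) := by
    intro x hx
    rw [show (2:ℝ) = ((2:ℕ):ℝ) by norm_num, Real.rpow_natCast]
  rw [setIntegral_congr_fun measurableSet_Ioi hcast] at h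
  rw [h]
  have hG : Real.Gamma ((2 + 1) / 2) = Real.sqrt π / 2 := by
    rw [show ((2:ℝ) + 1) / 2 = 1/2 + 1 by norm_num, Real.Gamma_add_one (by norm_num),
      Real.Gamma_one_half_eq]
    ring
  rw [hG]
  have hb' : (0:ℝ) < Real.sqrt b := Real.sqrt_pos.mpr hb
  have h1 : b ^ (-(2 + 1) / 2 : ℝ) = (Real.sqrt b)⁻¹ * b⁻¹ := by
    rw [show (-(2 + 1) / 2 : ℝ) = (-1/2) + (-1) by norm_num, Real.rpow_add hb,
      Real.rpow_neg_one, show (-1/2 : ℝ) = -(1/2) by norm_num, Real.rpow_neg hb.le,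
      ← Real.sqrt_eq_rpow]
  rw [h1, Real.sqrt_div pi_pos.le b]
  have hsb : Real.sqrt b ≠ 0 := ne_of_gt (Real.sqrt_pos.mpr hb)
  field_simp


lemma gauss_m4 {b : ℝ} (hb : 0 < b) :
    ∫ x : ℝ, x ^ 4 * Real.exp (-b * x ^ 2) = 3 * ((2 * b)⁻¹) ^ 2 * Real.sqrt (π / b) := by
  have habs : (fun x : ℝ => x ^ 4 * Real.exp (-b * x ^ 2))
      = fun x : ℝ => |x| ^ 4 * Real.exp (-b * |x| ^ 2) := by
    funext x
    rw [sq_abs, show |x| ^ 4 = (|x| ^ 2) ^ 2 by ring, sq_abs]; ring_nf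
  rw [habs, integral_comp_abs (f := fun x : ℝ => x ^ 4 * Real.exp (-b * x ^ 2))]
  have h := integral_rpow_mul_exp_neg_mul_rpow (p := 2) (q := 4) (by norm_num) (by norm_num) hb
  have hcast : ∀ x ∈ Set.Ioi (0:ℝ), x ^ (4:ℝ) * Real.exp (-b * x ^ (2:ℝ))
      = x ^ 4 * Real.exp (-b * x ^ 2) := by
    intro x hx
    rw [show (2:ℝ) = ((2:ℕ):ℝ) by norm_num, show (4:ℝ) = ((4:ℕ):ℝ) by norm_num,
      Real.rpow_natCast, Real.rpow_natCast]
  rw [setIntegral_congr_fun measurableSet_Ioi hcast] at h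
  rw [h]
  have hG : Real.Gamma ((4 + 1) / 2) = 3 * Real.sqrt π / 4 := by
    rw [show ((4:ℝ) + 1) / 2 = (1/2 + 1) + 1 by norm_num, Real.Gamma_add_one (by norm_num),
      Real.Gamma_add_one (by norm_num), Real.Gamma_one_half_eq]
    ring
  rw [hG]
  have hb' : (0:ℝ) < Real.sqrt b := Real.sqrt_pos.mpr hb
  have h1 : b ^ (-(4 + 1) / 2 : ℝ) = (Real.sqrt b)⁻¹ * (b ^ 2)⁻¹ := by
    rw [show (-(4 + 1) / 2 : ℝ) = (-(1/2)) + (-2) by norm_num, Real.rpow_add hb,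
      Real.rpow_neg hb.le, ← Real.sqrt_eq_rpow,
      show (-2 : ℝ) = -((2:ℕ):ℝ) by norm_num, Real.rpow_neg hb.le, Real.rpow_natCast]
  rw [h1, Real.sqrt_div pi_pos.le b]
  have hsb : Real.sqrt b ≠ 0 := ne_of_gt hb'
  field_simp
  ring

lemma gauss_m0 {b : ℝ} (hb : 0 < b) :
    ∫ x : ℝ, x ^ 0 * Real.exp (-b * x ^ 2) = Real.sqrt (π / b) := by
  simpa using integral_gaussian b

lemma gauss_shift_int {b : ℝ} (hb : 0 < b) (m : ℕ) (c : ℝ) :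
    Integrable (fun x : ℝ => (x + c) ^ m * Real.exp (-b * x ^ 2)) := by
  have : (fun x : ℝ => (x + c) ^ m * Real.exp (-b * x ^ 2))
      = fun x => ∑ k ∈ Finset.range (m + 1),
          (c ^ (m - k) * (m.choose k)) * (x ^ k * Real.exp (-b * x ^ 2)) := by
    funext x
    rw [add_pow, Finset.sum_mul]
    refine Finset.sum_congr rfl fun k _ => by ring
  rw [this]
  exact integrable_finset_sum _ fun k _ => (gauss_int_pow hb k).const_mul _

lemma gauss_shift2 {b : ℝ} (hb : 0 < b) (c : ℝ) :
    ∫ x : ℝ, (x + c) ^ 2 * Real.exp (-b * x ^ 2)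
      = ((2 * b)⁻¹ + c ^ 2) * Real.sqrt (π / b) := by
  have e1 : (fun x : ℝ => (x + c) ^ 2 * Real.exp (-b * x ^ 2))
      = fun x => (x ^ 2 * Real.exp (-b * x ^ 2)) + ((2 * c) * (x ^ 1 * Real.exp (-b * x ^ 2))
          + (c ^ 2) * (x ^ 0 * Real.exp (-b * x ^ 2))) := by
    funext x; ring
  have i1 : Integrable (fun x : ℝ => 2 * c * (x ^ 1 * Real.exp (-b * x ^ 2))
      + c ^ 2 * (x ^ 0 * Real.exp (-b * x ^ 2))) :=
    ((gauss_int_pow hb 1).const_mul (2*c)).add ((gauss_int_pow hb 0).const_mul (c^2))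
  rw [e1, integral_add (gauss_int_pow hb 2) i1,
    integral_add ((gauss_int_pow hb 1).const_mul (2*c)) ((gauss_int_pow hb 0).const_mul (c^2)),
    integral_const_mul, integral_const_mul, gauss_m2 hb, gauss_m0 hb,
    gauss_odd 1 (by norm_num)]
  ring

lemma gauss_shift4 {b : ℝ} (hb : 0 < b) (c : ℝ) :
    ∫ x : ℝ, (x + c) ^ 4 * Real.exp (-b * x ^ 2)
      = (3 * ((2 * b)⁻¹) ^ 2 + 6 * (2 * b)⁻¹ * c ^ 2 + c ^ 4) * Real.sqrt (π / b) := by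
  have e1 : (fun x : ℝ => (x + c) ^ 4 * Real.exp (-b * x ^ 2))
      = fun x => (x ^ 4 * Real.exp (-b * x ^ 2)) + ((4 * c) * (x ^ 3 * Real.exp (-b * x ^ 2))
          + ((6 * c ^ 2) * (x ^ 2 * Real.exp (-b * x ^ 2))
          + ((4 * c ^ 3) * (x ^ 1 * Real.exp (-b * x ^ 2))
          + (c ^ 4) * (x ^ 0 * Real.exp (-b * x ^ 2))))) := by
    funext x; ring
  have i1 : Integrable (fun x : ℝ => 4 * c * (x ^ 3 * Real.exp (-b * x ^ 2))
      + (6 * c ^ 2 * (x ^ 2 * Real.exp (-b * x ^ 2))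
      + (4 * c ^ 3 * (x ^ 1 * Real.exp (-b * x ^ 2))
      + c ^ 4 * (x ^ 0 * Real.exp (-b * x ^ 2))))) :=
    ((gauss_int_pow hb 3).const_mul _).add (((gauss_int_pow hb 2).const_mul _).add
      (((gauss_int_pow hb 1).const_mul _).add ((gauss_int_pow hb 0).const_mul _)))
  have i2 : Integrable (fun x : ℝ => 6 * c ^ 2 * (x ^ 2 * Real.exp (-b * x ^ 2))
      + (4 * c ^ 3 * (x ^ 1 * Real.exp (-b * x ^ 2))
      + c ^ 4 * (x ^ 0 * Real.exp (-b * x ^ 2)))) :=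
    ((gauss_int_pow hb 2).const_mul _).add
      (((gauss_int_pow hb 1).const_mul _).add ((gauss_int_pow hb 0).const_mul _))
  have i3 : Integrable (fun x : ℝ => 4 * c ^ 3 * (x ^ 1 * Real.exp (-b * x ^ 2))
      + c ^ 4 * (x ^ 0 * Real.exp (-b * x ^ 2))) :=
    ((gauss_int_pow hb 1).const_mul _).add ((gauss_int_pow hb 0).const_mul _)
  rw [e1, integral_add (gauss_int_pow hb 4) i1,
    integral_add ((gauss_int_pow hb 3).const_mul (4*c)) i2,
    integral_add ((gauss_int_pow hb 2).const_mul (6*c^2)) i3,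
    integral_add ((gauss_int_pow hb 1).const_mul (4*c^3)) ((gauss_int_pow hb 0).const_mul (c^4)),
    integral_const_mul, integral_const_mul, integral_const_mul, integral_const_mul,
    gauss_m4 hb, gauss_m2 hb, gauss_m0 hb, gauss_odd 1 (by norm_num),
    gauss_odd 3 ⟨1, by norm_num⟩]
  ring

lemma pi_big {d : ℕ} (hd : 1 ≤ d) {b : ℝ} (hb : 0 < b) (μ : Fin d → ℝ) :
    Integrable (fun y : Fin d → ℝ =>
        (∑ i, (y i + μ i) ^ 2) ^ 2 * Real.exp (-b * ∑ i, (y i) ^ 2)) ∧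
    ∫ y : Fin d → ℝ, (∑ i, (y i + μ i) ^ 2) ^ 2 * Real.exp (-b * ∑ i, (y i) ^ 2)
      = (((d : ℝ) * (2 * b)⁻¹ + ∑ i, (μ i) ^ 2) ^ 2 + 2 * (d : ℝ) * ((2 * b)⁻¹) ^ 2
          + 4 * (2 * b)⁻¹ * (∑ i, (μ i) ^ 2)) * (Real.sqrt (π / b)) ^ d := by
  set G : Fin d → Fin d → Fin d → ℝ → ℝ := fun i j k x =>
    (if k = i then (x + μ i) ^ 2 else 1) * (if k = j then (x + μ j) ^ 2 else 1)
      * Real.exp (-b * x ^ 2) with hG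
  -- integrability of each 1D factor
  have hGint : ∀ i j k, Integrable (G i j k) := by
    intro i j k
    by_cases hki : k = i
    · subst hki
      by_cases hkj : k = j
      · subst hkj
        have h4 : G k k k = fun x => (x + μ k) ^ 4 * Real.exp (-b * x ^ 2) := by
          funext x; simp only [hG, eq_self_iff_true, if_true]; ring
        rw [h4]; exact gauss_shift_int hb 4 _
      · have h2 : G k j k = fun x => (x + μ k) ^ 2 * Real.exp (-b * x ^ 2) := by
          funext x; simp only [hG, eq_self_iff_true, if_true, if_neg hkj, mul_one]
        rw [h2]; exact gauss_shift_int hb 2 _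
    · by_cases hkj : k = j
      · subst hkj
        have h2 : G i k k = fun x => (x + μ k) ^ 2 * Real.exp (-b * x ^ 2) := by
          funext x; simp only [hG, eq_self_iff_true, if_true, if_neg hki, one_mul]
        rw [h2]; exact gauss_shift_int hb 2 _
      · have h0 : G i j k = fun x => Real.exp (-b * x ^ 2) := by
          funext x; simp only [hG, if_neg hki, if_neg hkj, one_mul]
        rw [h0]; simpa using gauss_shift_int hb 0 0
  -- value of each 1D integral
  have hGval : ∀ i j k, ∫ x, G i j k x
      = if k = i then (if k = j then
            (3 * ((2 * b)⁻¹) ^ 2 + 6 * (2 * b)⁻¹ * (μ i) ^ 2 + (μ i) ^ 4) * Real.sqrt (π / b)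
          else ((2 * b)⁻¹ + (μ i) ^ 2) * Real.sqrt (π / b))
        else (if k = j then ((2 * b)⁻¹ + (μ j) ^ 2) * Real.sqrt (π / b) else Real.sqrt (π / b)) := by
    intro i j k
    by_cases hki : k = i
    · subst hki
      by_cases hkj : k = j
      · subst hkj
        simp only [eq_self_iff_true, if_true]
        have h4 : G k k k = fun x => (x + μ k) ^ 4 * Real.exp (-b * x ^ 2) := by
          funext x; simp only [hG, eq_self_iff_true, if_true]; ring
        rw [h4, gauss_shift4 hb]
      · simp only [eq_self_iff_true, if_true, if_neg hkj]
        have h2 : G k j k = fun x => (x + μ k) ^ 2 * Real.exp (-b * x ^ 2) := by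
          funext x; simp only [hG, eq_self_iff_true, if_true, if_neg hkj, mul_one]
        rw [h2, gauss_shift2 hb]
    · by_cases hkj : k = j
      · subst hkj
        simp only [eq_self_iff_true, if_true, if_neg hki]
        have h2 : G i k k = fun x => (x + μ k) ^ 2 * Real.exp (-b * x ^ 2) := by
          funext x; simp only [hG, eq_self_iff_true, if_true, if_neg hki, one_mul]
        rw [h2, gauss_shift2 hb]
      · simp only [if_neg hki, if_neg hkj]
        have h0 : G i j k = fun x => x ^ 0 * Real.exp (-b * x ^ 2) := by
          funext x; simp only [hG, if_neg hki, if_neg hkj, one_mul, pow_zero]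
        rw [h0, gauss_m0 hb]
  -- pointwise expansion of the integrand as a double sum of product functions
  have key : ∀ y : Fin d → ℝ,
      (∑ i, (y i + μ i) ^ 2) ^ 2 * Real.exp (-b * ∑ i, (y i) ^ 2)
        = ∑ i, ∑ j, ∏ k, G i j k (y k) := by
    intro y
    have hexp : Real.exp (-b * ∑ i, (y i) ^ 2) = ∏ k, Real.exp (-b * (y k) ^ 2) := by
      rw [Finset.mul_sum, Real.exp_sum]
    have hprod : ∀ i j, ∏ k, G i j k (y k)
        = (y i + μ i) ^ 2 * (y j + μ j) ^ 2 * ∏ k, Real.exp (-b * (y k) ^ 2) := by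
      intro i j
      simp only [hG]
      rw [Finset.prod_mul_distrib, Finset.prod_mul_distrib]
      congr 2
      · rw [Finset.prod_ite_eq' Finset.univ i (fun k => (y k + μ i) ^ 2)]
        simp
      · rw [Finset.prod_ite_eq' Finset.univ j (fun k => (y k + μ j) ^ 2)]
        simp
    rw [hexp, pow_two, Finset.sum_mul_sum]
    rw [Finset.sum_mul]
    refine Finset.sum_congr rfl fun i _ => ?_
    rw [Finset.sum_mul]
    refine Finset.sum_congr rfl fun j _ => ?_
    rw [hprod i j]
  have hFint : ∀ i j, Integrable (fun y : Fin d → ℝ => ∏ k, G i j k (y k)) :=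
    fun i j => Integrable.fintype_prod (fun k => hGint i j k)
  have hfun : (fun y : Fin d → ℝ =>
      (∑ i, (y i + μ i) ^ 2) ^ 2 * Real.exp (-b * ∑ i, (y i) ^ 2))
      = fun y => ∑ i, ∑ j, ∏ k, G i j k (y k) := funext key
  have hint : Integrable (fun y : Fin d → ℝ =>
      (∑ i, (y i + μ i) ^ 2) ^ 2 * Real.exp (-b * ∑ i, (y i) ^ 2)) := by
    rw [hfun]
    exact integrable_finset_sum _ fun i _ => integrable_finset_sum _ fun j _ => hFint i j
  refine ⟨hint, ?_⟩
  rw [hfun, integral_finset_sum _ fun i _ => integrable_finset_sum _ fun j _ => hFint i j]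
  have hswap : ∀ i : Fin d, ∫ y : Fin d → ℝ, ∑ j, ∏ k, G i j k (y k)
      = ∑ j, ∫ y : Fin d → ℝ, ∏ k, G i j k (y k) :=
    fun i => integral_finset_sum _ fun j _ => hFint i j
  simp_rw [hswap]
  have hprod_int : ∀ i j, ∫ y : Fin d → ℝ, ∏ k, G i j k (y k) = ∏ k, ∫ x : ℝ, G i j k x :=
    fun i j => MeasureTheory.integral_fintype_prod_eq_prod (fun k => G i j k)
  simp_rw [hprod_int]
  -- evaluate the product of integrals
  have hpp : ∀ i j : Fin d, ∏ k, ∫ x : ℝ, G i j k x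
      = (if i = j then (3 * ((2 * b)⁻¹) ^ 2 + 6 * (2 * b)⁻¹ * (μ i) ^ 2 + (μ i) ^ 4)
          else ((2 * b)⁻¹ + (μ i) ^ 2) * ((2 * b)⁻¹ + (μ j) ^ 2)) * Real.sqrt (π / b) ^ d := by
    intro i j
    by_cases hij : i = j
    · subst hij
      simp only [if_pos rfl]
      rw [← Finset.mul_prod_erase _ _ (Finset.mem_univ i), hGval i i i]
      simp only [eq_self_iff_true, if_true]
      have : ∀ k ∈ Finset.univ.erase i, ∫ x : ℝ, G i i k x = Real.sqrt (π / b) := by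
        intro k hk
        rw [hGval i i k, if_neg (Finset.ne_of_mem_erase hk), if_neg (Finset.ne_of_mem_erase hk)]
      rw [Finset.prod_congr rfl this, Finset.prod_const, Finset.card_erase_of_mem
        (Finset.mem_univ i), Finset.card_univ, Fintype.card_fin]
      rw [mul_assoc, ← pow_succ']
      congr 2
      omega
    · simp only [if_neg hij]
      have hji : j ≠ i := fun h => hij h.symm
      have h2d : 2 ≤ d := by
        have : 1 < Fintype.card (Fin d) := Fintype.one_lt_card_iff_nontrivial.mpr ⟨i, j, hij⟩
        rwa [Fintype.card_fin] at this
      rw [← Finset.mul_prod_erase _ _ (Finset.mem_univ i), hGval i j i]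
      simp only [eq_self_iff_true, if_true, if_neg hij]
      rw [← Finset.mul_prod_erase _ _ (Finset.mem_erase.mpr ⟨hji, Finset.mem_univ j⟩),
        hGval i j j]
      simp only [eq_self_iff_true, if_true, if_neg hji]
      have : ∀ k ∈ (Finset.univ.erase i).erase j, ∫ x : ℝ, G i j k x = Real.sqrt (π / b) := by
        intro k hk
        have hk1 : k ≠ j := Finset.ne_of_mem_erase hk
        have hk2 : k ≠ i := Finset.ne_of_mem_erase (Finset.mem_of_mem_erase hk)
        rw [hGval i j k, if_neg hk2, if_neg hk1]
      rw [Finset.prod_congr rfl this, Finset.prod_const, Finset.card_erase_of_mem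
        (Finset.mem_erase.mpr ⟨hji, Finset.mem_univ j⟩), Finset.card_erase_of_mem
        (Finset.mem_univ i), Finset.card_univ, Fintype.card_fin]
      have hde : d - 1 - 1 + 1 + 1 = d := by omega
      rw [show ((2 * b)⁻¹ + μ i ^ 2) * Real.sqrt (π / b) * (((2 * b)⁻¹ + μ j ^ 2)
        * Real.sqrt (π / b) * Real.sqrt (π / b) ^ (d - 1 - 1))
        = ((2 * b)⁻¹ + μ i ^ 2) * ((2 * b)⁻¹ + μ j ^ 2)
          * Real.sqrt (π / b) ^ (d - 1 - 1 + 1 + 1) by rw [pow_succ, pow_succ]; ring, hde]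
  simp_rw [hpp]
  -- evaluate the double sum
  have term_eq : ∀ i j : Fin d,
      (if i = j then (3 * ((2 * b)⁻¹) ^ 2 + 6 * (2 * b)⁻¹ * (μ i) ^ 2 + (μ i) ^ 4)
        else ((2 * b)⁻¹ + (μ i) ^ 2) * ((2 * b)⁻¹ + (μ j) ^ 2)) * Real.sqrt (π / b) ^ d
      = ((2 * b)⁻¹ + (μ i) ^ 2) * ((2 * b)⁻¹ + (μ j) ^ 2) * Real.sqrt (π / b) ^ d
        + (if i = j then (2 * ((2 * b)⁻¹) ^ 2 + 4 * (2 * b)⁻¹ * (μ i) ^ 2)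
            * Real.sqrt (π / b) ^ d else 0) := by
    intro i j
    by_cases hij : i = j
    · subst hij; simp only [eq_self_iff_true, if_true]; ring
    · simp only [if_neg hij, add_zero]
  simp_rw [term_eq, Finset.sum_add_distrib]
  have hdiag : ∀ i : Fin d, (∑ j, if i = j then (2 * ((2 * b)⁻¹) ^ 2
      + 4 * (2 * b)⁻¹ * (μ i) ^ 2) * Real.sqrt (π / b) ^ d else 0)
      = (2 * ((2 * b)⁻¹) ^ 2 + 4 * (2 * b)⁻¹ * (μ i) ^ 2) * Real.sqrt (π / b) ^ d := by
    intro i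
    rw [Finset.sum_ite_eq Finset.univ i]
    simp
  simp_rw [hdiag]
  have hquad : ∑ i : Fin d, ∑ j : Fin d, ((2 * b)⁻¹ + (μ i) ^ 2) * ((2 * b)⁻¹ + (μ j) ^ 2)
      * Real.sqrt (π / b) ^ d
      = ((d : ℝ) * (2 * b)⁻¹ + ∑ i, (μ i) ^ 2) ^ 2 * Real.sqrt (π / b) ^ d := by
    have h1 : ∑ i : Fin d, ((2 * b)⁻¹ + (μ i) ^ 2) = (d : ℝ) * (2 * b)⁻¹ + ∑ i, (μ i) ^ 2 := by
      rw [Finset.sum_add_distrib, Finset.sum_const, Finset.card_univ, Fintype.card_fin,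
        nsmul_eq_mul]
    calc ∑ i : Fin d, ∑ j : Fin d, ((2 * b)⁻¹ + (μ i) ^ 2) * ((2 * b)⁻¹ + (μ j) ^ 2)
        * Real.sqrt (π / b) ^ d
        = (∑ i : Fin d, ((2 * b)⁻¹ + (μ i) ^ 2)) * (∑ j : Fin d, ((2 * b)⁻¹ + (μ j) ^ 2))
          * Real.sqrt (π / b) ^ d := by
          rw [Finset.sum_mul_sum, Finset.sum_mul]
          refine Finset.sum_congr rfl fun i _ => ?_
          rw [Finset.sum_mul]
      _ = _ := by rw [h1, ← pow_two]
  rw [hquad]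
  have hlin : ∑ i : Fin d, (2 * ((2 * b)⁻¹) ^ 2 + 4 * (2 * b)⁻¹ * (μ i) ^ 2)
      * Real.sqrt (π / b) ^ d
      = (2 * (d : ℝ) * ((2 * b)⁻¹) ^ 2 + 4 * (2 * b)⁻¹ * ∑ i, (μ i) ^ 2)
        * Real.sqrt (π / b) ^ d := by
    rw [← Finset.sum_mul]
    congr 1
    rw [Finset.sum_add_distrib, Finset.sum_const, Finset.card_univ, Fintype.card_fin,
      nsmul_eq_mul, ← Finset.mul_sum]
    ring
  rw [hlin]
  ring


lemma euclid_big {d : ℕ} (hd : 1 ≤ d) {b : ℝ} (hb : 0 < b)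
    (xk xs : EuclideanSpace ℝ (Fin d)) :
    Integrable (fun x : EuclideanSpace ℝ (Fin d) =>
        ‖x - xs‖ ^ 4 * Real.exp (-b * ‖x - xk‖ ^ 2)) ∧
    ∫ x : EuclideanSpace ℝ (Fin d), ‖x - xs‖ ^ 4 * Real.exp (-b * ‖x - xk‖ ^ 2)
      = (((d : ℝ) * (2 * b)⁻¹ + ‖xk - xs‖ ^ 2) ^ 2 + 2 * (d : ℝ) * ((2 * b)⁻¹) ^ 2
          + 4 * (2 * b)⁻¹ * ‖xk - xs‖ ^ 2) * (Real.sqrt (π / b)) ^ d := by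
  set w : EuclideanSpace ℝ (Fin d) := xk - xs with hw
  set μ : Fin d → ℝ := fun i => w i with hμ
  have hm2 : ‖w‖ ^ 2 = ∑ i, (μ i) ^ 2 := by
    rw [EuclideanSpace.norm_eq, Real.sq_sqrt (by positivity)]
    simp [hμ]
  -- the shifted function on EuclideanSpace
  have hshift : ∀ x : EuclideanSpace ℝ (Fin d),
      ‖(x + xk) - xs‖ ^ 4 * Real.exp (-b * ‖(x + xk) - xk‖ ^ 2)
        = ‖x + w‖ ^ 4 * Real.exp (-b * ‖x‖ ^ 2) := by
    intro x
    have h1 : (x + xk) - xs = x + w := by rw [hw]; abel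
    have h2 : (x + xk) - xk = x := by abel
    rw [h1, h2]
  -- equivalence with the Pi space
  have hmp := (EuclideanSpace.volume_preserving_symm_measurableEquiv_toLp (Fin d)).symm
  have hcomp : ∀ y : Fin d → ℝ,
      ‖(MeasurableEquiv.toLp 2 (Fin d → ℝ)) y + w‖ ^ 4
        * Real.exp (-b * ‖(MeasurableEquiv.toLp 2 (Fin d → ℝ)) y‖ ^ 2)
      = (∑ i, (y i + μ i) ^ 2) ^ 2 * Real.exp (-b * ∑ i, (y i) ^ 2) := by
    intro y
    have hn1 : ‖(MeasurableEquiv.toLp 2 (Fin d → ℝ)) y + w‖ ^ 2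
        = ∑ i, (y i + μ i) ^ 2 := by
      rw [EuclideanSpace.norm_eq, Real.sq_sqrt (by positivity)]
      refine Finset.sum_congr rfl fun i _ => ?_
      simp [MeasurableEquiv.coe_toLp, PiLp.add_apply, hμ,
        Real.norm_eq_abs, sq_abs]
    have hn2 : ‖(MeasurableEquiv.toLp 2 (Fin d → ℝ)) y‖ ^ 2 = ∑ i, (y i) ^ 2 := by
      rw [EuclideanSpace.norm_eq, Real.sq_sqrt (by positivity)]
      refine Finset.sum_congr rfl fun i _ => ?_
      simp [MeasurableEquiv.coe_toLp, Real.norm_eq_abs, sq_abs]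
    rw [show ∀ r : ℝ, r ^ 4 = (r ^ 2) ^ 2 from fun r => by ring, hn1, hn2]
  -- integrability
  have hint_pi := (pi_big hd hb μ).1
  have hint_shift : Integrable (fun x : EuclideanSpace ℝ (Fin d) =>
      ‖x + w‖ ^ 4 * Real.exp (-b * ‖x‖ ^ 2)) := by
    rw [← MeasurePreserving.integrable_comp_emb hmp
      (MeasurableEquiv.measurableEmbedding _)]
    simp only [Function.comp_def]
    exact hint_pi.congr (Filter.Eventually.of_forall fun y => (hcomp y).symm)
  have hint : Integrable (fun x : EuclideanSpace ℝ (Fin d) =>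
      ‖x - xs‖ ^ 4 * Real.exp (-b * ‖x - xk‖ ^ 2)) := by
    have := hint_shift.comp_sub_right xk
    refine this.congr (Filter.Eventually.of_forall fun x => ?_)
    have h1 : (x - xk) + w = x - xs := by rw [hw]; abel
    simp only [h1]
  refine ⟨hint, ?_⟩
  -- integral computation
  calc ∫ x : EuclideanSpace ℝ (Fin d), ‖x - xs‖ ^ 4 * Real.exp (-b * ‖x - xk‖ ^ 2)
      = ∫ x : EuclideanSpace ℝ (Fin d), ‖x + w‖ ^ 4 * Real.exp (-b * ‖x‖ ^ 2) := by
        rw [← integral_add_right_eq_self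
          (fun x : EuclideanSpace ℝ (Fin d) => ‖x - xs‖ ^ 4 * Real.exp (-b * ‖x - xk‖ ^ 2)) xk]
        exact integral_congr_ae (Filter.Eventually.of_forall fun x => hshift x)
    _ = ∫ y : Fin d → ℝ, (∑ i, (y i + μ i) ^ 2) ^ 2 * Real.exp (-b * ∑ i, (y i) ^ 2) := by
        rw [← hmp.integral_comp (MeasurableEquiv.measurableEmbedding _)]
        exact integral_congr_ae (Filter.Eventually.of_forall fun y => hcomp y)
    _ = _ := by rw [(pi_big hd hb μ).2, hm2]


set_option maxHeartbeats 1000000 in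
/-- Theorem 3.4: upper and lower bounds for `m_k⁻¹` where
`m_k² = E[(f(x) − f*)²]` under the Gaussian `N(x_k, ρ^k λ⁻¹ I_d)`. -/
theorem mk_inv_bounds
    (d : ℕ) (hd : 1 ≤ d)
    (f : EuclideanSpace ℝ (Fin d) → ℝ) (hf : Measurable f)
    (xs : EuclideanSpace ℝ (Fin d)) (l L : ℝ) (hl : 0 < l) (hlL : l ≤ L)
    (hlow : ∀ x, f xs + l / 2 * ‖x - xs‖ ^ 2 ≤ f x)
    (hup : ∀ x, f x ≤ f xs + L / 2 * ‖x - xs‖ ^ 2)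
    (k : ℕ) (lam ρ M : ℝ) (hlam : 0 < lam) (hρ0 : 0 < ρ) (hρ1 : ρ < 1) (hM : 0 < M)
    (xk : EuclideanSpace ℝ (Fin d))
    (hxk : ‖xk - xs‖ ^ 2 ≤ ρ ^ k * M)
    (mk2 : ℝ)
    (hmk2 : mk2 = ((ρ ^ k)⁻¹ * lam / (2 * π)) ^ ((d : ℝ) / 2) *
      ∫ x : EuclideanSpace ℝ (Fin d),
        (f x - f xs) ^ 2 * Real.exp (-((ρ ^ k)⁻¹ * lam / 2 * ‖x - xk‖ ^ 2)))
    (c C : ℝ)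
    (hc : c = 2 * lam / (L * d * Real.sqrt (3 + 6 * M * lam + M ^ 2 * lam ^ 2)))
    (hC : C = 2 * lam / (l * Real.sqrt (3 * d))) :
    0 < Real.sqrt mk2 ∧
      c * (ρ ^ k)⁻¹ ≤ (Real.sqrt mk2)⁻¹ ∧
      (Real.sqrt mk2)⁻¹ ≤ C * (ρ ^ k)⁻¹ := by
  have hL : 0 < L := lt_of_lt_of_le hl hlL
  have hd1 : (1 : ℝ) ≤ (d : ℝ) := by exact_mod_cast hd
  have hdpos : (0 : ℝ) < (d : ℝ) := lt_of_lt_of_le one_pos hd1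
  set P : ℝ := ρ ^ k with hP
  have hPpos : 0 < P := pow_pos hρ0 k
  set b : ℝ := P⁻¹ * lam / 2 with hb
  have hb0 : 0 < b := by positivity
  obtain ⟨hint4, hval4⟩ := euclid_big hd hb0 xk xs
  set m2 : ℝ := ‖xk - xs‖ ^ 2 with hm2
  have hm2nonneg : 0 ≤ m2 := sq_nonneg _
  have hm2le : m2 ≤ P * M := hxk
  set s0 : ℝ := (2 * b)⁻¹ with hs0
  have hs0pos : 0 < s0 := by positivity
  have hs0eq : s0 = P / lam := by
    rw [hs0, hb]; field_simp
  set Q : ℝ := ((d : ℝ) * s0 + m2) ^ 2 + 2 * (d : ℝ) * s0 ^ 2 + 4 * s0 * m2 with hQ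
  set g0 : ℝ := Real.sqrt (π / b) with hg0
  have hg0pos : 0 < g0 := Real.sqrt_pos.mpr (by positivity)
  set pref : ℝ := (P⁻¹ * lam / (2 * π)) ^ ((d : ℝ) / 2) with hpref
  have hbase : 0 < P⁻¹ * lam / (2 * π) := by positivity
  have hprefpos : 0 < pref := Real.rpow_pos_of_pos hbase _
  -- pref * g0 ^ d = 1
  have hone : pref * g0 ^ d = 1 := by
    have h1 : g0 ^ d = (π / b) ^ ((d : ℝ) / 2) := by
      rw [hg0, Real.sqrt_eq_rpow, ← Real.rpow_natCast ((π / b) ^ (1/2 : ℝ)) d,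
        ← Real.rpow_mul (by positivity)]
      congr 1
      ring
    rw [h1, hpref, ← Real.mul_rpow hbase.le (by positivity)]
    have h2 : P⁻¹ * lam / (2 * π) * (π / b) = 1 := by
      rw [hb]
      field_simp
    rw [h2, Real.one_rpow]
  -- sandwich the middle integral
  have hub : ∀ x : EuclideanSpace ℝ (Fin d),
      (f x - f xs) ^ 2 * Real.exp (-(b * ‖x - xk‖ ^ 2))
        ≤ (L / 2) ^ 2 * (‖x - xs‖ ^ 4 * Real.exp (-b * ‖x - xk‖ ^ 2)) := by
    intro x
    rw [neg_mul]
    have h0 : 0 ≤ f x - f xs := by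
      have h := hlow x
      have h' : 0 ≤ l / 2 * ‖x - xs‖ ^ 2 := by positivity
      linarith
    have h1 : f x - f xs ≤ L / 2 * ‖x - xs‖ ^ 2 := by linarith [hup x]
    have h2 : (f x - f xs) ^ 2 ≤ (L / 2 * ‖x - xs‖ ^ 2) ^ 2 := pow_le_pow_left₀ h0 h1 2
    have h3 : (L / 2 * ‖x - xs‖ ^ 2) ^ 2 = (L / 2) ^ 2 * ‖x - xs‖ ^ 4 := by ring
    calc (f x - f xs) ^ 2 * Real.exp (-(b * ‖x - xk‖ ^ 2))
        ≤ (L / 2 * ‖x - xs‖ ^ 2) ^ 2 * Real.exp (-(b * ‖x - xk‖ ^ 2)) :=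
          mul_le_mul_of_nonneg_right h2 (Real.exp_pos _).le
      _ = (L / 2) ^ 2 * (‖x - xs‖ ^ 4 * Real.exp (-(b * ‖x - xk‖ ^ 2))) := by ring
  have hlb : ∀ x : EuclideanSpace ℝ (Fin d),
      (l / 2) ^ 2 * (‖x - xs‖ ^ 4 * Real.exp (-b * ‖x - xk‖ ^ 2))
        ≤ (f x - f xs) ^ 2 * Real.exp (-(b * ‖x - xk‖ ^ 2)) := by
    intro x
    rw [neg_mul]
    have h0 : 0 ≤ l / 2 * ‖x - xs‖ ^ 2 := by positivity
    have h1 : l / 2 * ‖x - xs‖ ^ 2 ≤ f x - f xs := by linarith [hlow x]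
    have h2 : (l / 2 * ‖x - xs‖ ^ 2) ^ 2 ≤ (f x - f xs) ^ 2 := pow_le_pow_left₀ h0 h1 2
    calc (l / 2) ^ 2 * (‖x - xs‖ ^ 4 * Real.exp (-(b * ‖x - xk‖ ^ 2)))
        = (l / 2 * ‖x - xs‖ ^ 2) ^ 2 * Real.exp (-(b * ‖x - xk‖ ^ 2)) := by ring
      _ ≤ (f x - f xs) ^ 2 * Real.exp (-(b * ‖x - xk‖ ^ 2)) :=
          mul_le_mul_of_nonneg_right h2 (Real.exp_pos _).le
  have hmid_meas : Measurable fun x : EuclideanSpace ℝ (Fin d) =>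
      (f x - f xs) ^ 2 * Real.exp (-(b * ‖x - xk‖ ^ 2)) := by
    apply ((hf.sub measurable_const).pow measurable_const).mul
    exact ((((measurable_id.sub measurable_const).norm.pow measurable_const).const_mul
      b).neg).exp
  have hmid_int : Integrable (fun x : EuclideanSpace ℝ (Fin d) =>
      (f x - f xs) ^ 2 * Real.exp (-(b * ‖x - xk‖ ^ 2))) := by
    refine Integrable.mono' (hint4.const_mul ((L / 2) ^ 2))
      hmid_meas.aestronglyMeasurable ?_
    refine Filter.Eventually.of_forall fun x => ?_
    rw [Real.norm_of_nonneg (by positivity)]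
    exact hub x
  have hIub : (∫ x : EuclideanSpace ℝ (Fin d),
      (f x - f xs) ^ 2 * Real.exp (-(b * ‖x - xk‖ ^ 2)))
      ≤ (L / 2) ^ 2 * (Q * g0 ^ d) := by
    have := integral_mono hmid_int (hint4.const_mul ((L / 2) ^ 2)) hub
    rwa [integral_const_mul, hval4] at this
  have hIlb : (l / 2) ^ 2 * (Q * g0 ^ d) ≤ ∫ x : EuclideanSpace ℝ (Fin d),
      (f x - f xs) ^ 2 * Real.exp (-(b * ‖x - xk‖ ^ 2)) := by
    have := integral_mono (hint4.const_mul ((l / 2) ^ 2)) hmid_int hlb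
    rwa [integral_const_mul, hval4] at this
  -- bounds on mk2
  have hmk2ub : mk2 ≤ (L / 2) ^ 2 * Q := by
    rw [hmk2]
    calc pref * ∫ x : EuclideanSpace ℝ (Fin d),
          (f x - f xs) ^ 2 * Real.exp (-(b * ‖x - xk‖ ^ 2))
        ≤ pref * ((L / 2) ^ 2 * (Q * g0 ^ d)) :=
          mul_le_mul_of_nonneg_left hIub hprefpos.le
      _ = (L / 2) ^ 2 * Q * (pref * g0 ^ d) := by ring
      _ = (L / 2) ^ 2 * Q := by rw [hone, mul_one]
  have hmk2lb : (l / 2) ^ 2 * Q ≤ mk2 := by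
    rw [hmk2]
    calc (l / 2) ^ 2 * Q = (l / 2) ^ 2 * Q * (pref * g0 ^ d) := by rw [hone, mul_one]
      _ = pref * ((l / 2) ^ 2 * (Q * g0 ^ d)) := by ring
      _ ≤ pref * ∫ x : EuclideanSpace ℝ (Fin d),
          (f x - f xs) ^ 2 * Real.exp (-(b * ‖x - xk‖ ^ 2)) :=
          mul_le_mul_of_nonneg_left hIlb hprefpos.le
  clear_value pref g0 Q s0 m2 b P
  clear hint4 hval4 hIub hIlb hmid_int hmid_meas hub hlb hone hmk2 hpref hbase hprefpos
  clear hg0 hg0pos hm2 hs0 hb hP hf hlow hup hxk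
  clear f xs xk pref g0 hb0 b
  -- numeric bounds
  set T : ℝ := Real.sqrt (3 * d) with hT
  have hTpos : 0 < T := Real.sqrt_pos.mpr (by positivity)
  have hT2 : T ^ 2 = 3 * d := Real.sq_sqrt (by positivity)
  set R : ℝ := 3 + 6 * M * lam + M ^ 2 * lam ^ 2 with hR
  have hRpos : 0 < R := by positivity
  set U : ℝ := Real.sqrt R with hU
  have hUpos : 0 < U := Real.sqrt_pos.mpr hRpos
  have hU2 : U ^ 2 = R := Real.sq_sqrt hRpos.le
  set BC : ℝ := P * l * T / (2 * lam) with hBC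
  have hBCpos : 0 < BC := by positivity
  set Bc : ℝ := P * L * d * U / (2 * lam) with hBc
  have hBcpos : 0 < Bc := by positivity
  -- lower bound on mk2
  have hQlb : 3 * (d : ℝ) * s0 ^ 2 ≤ Q := by
    rw [hQ]
    have hdd : (d:ℝ) ≤ (d:ℝ) ^ 2 := le_self_pow₀ hd1 two_ne_zero
    have e0 : (d:ℝ) * s0 ≤ (d:ℝ) * s0 + m2 := le_add_of_nonneg_right hm2nonneg
    have e1 : ((d:ℝ) * s0) ^ 2 ≤ ((d:ℝ) * s0 + m2) ^ 2 :=
      pow_le_pow_left₀ (by positivity) e0 2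
    have e2 : (d:ℝ) * s0 ^ 2 ≤ ((d:ℝ) * s0) ^ 2 := by
      have h := mul_le_mul_of_nonneg_right hdd (sq_nonneg s0)
      have h2 : ((d:ℝ) * s0) ^ 2 = (d:ℝ) ^ 2 * s0 ^ 2 := by ring
      linarith
    have e3 : 0 ≤ s0 * m2 := mul_nonneg hs0pos.le hm2nonneg
    linarith
  have hmk2A : BC ^ 2 ≤ mk2 := by
    have h1 : BC ^ 2 = (l / 2) ^ 2 * (3 * (d : ℝ) * s0 ^ 2) := by
      rw [hBC, hs0eq]
      linear_combination (P ^ 2 * l ^ 2 / (4 * lam ^ 2)) * hT2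
    rw [h1]
    have := mul_le_mul_of_nonneg_left hQlb (by positivity : (0:ℝ) ≤ (l / 2) ^ 2)
    linarith
  have hmk2pos : 0 < mk2 := lt_of_lt_of_le (pow_pos hBCpos 2) hmk2A
  have hsqrtpos : 0 < Real.sqrt mk2 := Real.sqrt_pos.mpr hmk2pos
  -- upper bound on mk2
  have hm2le' : m2 ≤ M * lam * s0 := by
    rw [hs0eq]
    have : M * lam * (P / lam) = P * M := by field_simp
    rw [this]; exact hm2le
  have hQub : Q ≤ (d : ℝ) ^ 2 * s0 ^ 2 * R := by
    rw [hQ, hR]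
    have hdd : (d : ℝ) ≤ (d : ℝ) ^ 2 := le_self_pow₀ hd1 two_ne_zero
    have hA5 : (d:ℝ) * s0 ^ 2 ≤ (d:ℝ) ^ 2 * s0 ^ 2 :=
      mul_le_mul_of_nonneg_right hdd (sq_nonneg s0)
    have hA0 : s0 ^ 2 ≤ (d:ℝ) ^ 2 * s0 ^ 2 := by
      have h1 : (1:ℝ) ≤ (d:ℝ) ^ 2 := le_trans hd1 hdd
      have := mul_le_mul_of_nonneg_right h1 (sq_nonneg s0)
      linarith
    have e1 : ((d:ℝ) * s0 + m2) ^ 2 ≤ ((d:ℝ) * s0 + M * lam * s0) ^ 2 :=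
      pow_le_pow_left₀ (add_nonneg (by positivity) hm2nonneg)
        (add_le_add_right hm2le' _) 2
    have e2 : ((d:ℝ) * s0 + M * lam * s0) ^ 2
        = (d:ℝ) ^ 2 * s0 ^ 2 + 2 * (M * lam * ((d:ℝ) * s0 ^ 2)) + M ^ 2 * lam ^ 2 * s0 ^ 2 := by
      ring
    have hA3 : 4 * s0 * m2 ≤ 4 * (M * lam * s0 ^ 2) := by
      have h := mul_le_mul_of_nonneg_left hm2le' (show (0:ℝ) ≤ 4 * s0 by positivity)
      have h2 : 4 * s0 * (M * lam * s0) = 4 * (M * lam * s0 ^ 2) := by ring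
      linarith
    have hA4 : M * lam * ((d:ℝ) * s0 ^ 2) ≤ M * lam * ((d:ℝ) ^ 2 * s0 ^ 2) :=
      mul_le_mul_of_nonneg_left hA5 (by positivity)
    have hA6 : M ^ 2 * lam ^ 2 * s0 ^ 2 ≤ M ^ 2 * lam ^ 2 * ((d:ℝ) ^ 2 * s0 ^ 2) := by
      have := mul_le_mul_of_nonneg_left hA0 (show (0:ℝ) ≤ M ^ 2 * lam ^ 2 by positivity)
      linarith
    have hA7 : M * lam * s0 ^ 2 ≤ M * lam * ((d:ℝ) ^ 2 * s0 ^ 2) := by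
      have := mul_le_mul_of_nonneg_left hA0 (show (0:ℝ) ≤ M * lam by positivity)
      linarith
    linarith [e1, e2, hA3, hA4, hA5, hA6, hA7]
  have hmk2B : mk2 ≤ Bc ^ 2 := by
    have h1 : Bc ^ 2 = (L / 2) ^ 2 * ((d : ℝ) ^ 2 * s0 ^ 2 * R) := by
      rw [hBc, hs0eq]
      linear_combination (P ^ 2 * L ^ 2 * (d:ℝ) ^ 2 / (4 * lam ^ 2)) * hU2
    rw [h1]
    have := mul_le_mul_of_nonneg_left hQub (by positivity : (0:ℝ) ≤ (L / 2) ^ 2)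
    linarith
  -- conclude
  refine ⟨hsqrtpos, ?_, ?_⟩
  · -- c * P⁻¹ ≤ (sqrt mk2)⁻¹
    have hs : Real.sqrt mk2 ≤ Bc := by
      have := Real.sqrt_le_sqrt hmk2B
      rwa [Real.sqrt_sq hBcpos.le] at this
    have hinv : Bc⁻¹ ≤ (Real.sqrt mk2)⁻¹ := by
      apply inv_anti₀ hsqrtpos hs
    have hceq : c * P⁻¹ = Bc⁻¹ := by
      rw [hc, hBc]
      field_simp
    rwa [hceq]
  · -- (sqrt mk2)⁻¹ ≤ C * P⁻¹
    have hs : BC ≤ Real.sqrt mk2 := by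
      have := Real.sqrt_le_sqrt hmk2A
      rwa [Real.sqrt_sq hBCpos.le] at this
    have hinv : (Real.sqrt mk2)⁻¹ ≤ BC⁻¹ := inv_anti₀ hBCpos hs
    have hCeq : C * P⁻¹ = BC⁻¹ := by
      rw [hC, hBC]
      field_simp
    rwa [hCeq]


end
end
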